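/- arXiv:1412.2246 — 5 statements merged into one kernel-verified Lean document; each statement's English description precedes it below -/
import Mathlib

section
/- Let (K,|·|) be a complete ultrametric field, E a finite-dimensional K-vector space, and α : E → E a K-linear map. For each ρ ∈ R(α), the subspace (E_K̄)_ρ of E ⊗_K K̄ is defined over K, i.e. (E_K̄)_ρ = E_ρ ⊗_K K̄ where E_ρ := (E_K̄)_ρ ∩ E (identifying E with E ⊗ 1). Consequently E = ⊕_{ρ ∈ R(α)} E_ρ, and each E_ρ is an α-invariant vector subspace of E. -/
open scoped TensorProduct

/-- `(E_K̄)_ρ`: the sum of the generalized eigenspaces of `α ⊗ id` on `K̄ ⊗ E`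
for the eigenvalues `μ ∈ K̄` with `v μ = ρ`. -/
noncomputable def genEigSum {K : Type*} [NontriviallyNormedField K]
    {E : Type*} [AddCommGroup E] [Module K E] (α : E →ₗ[K] E)
    (Kbar : Type*) [Field Kbar] [Algebra K Kbar]
    (v : AbsoluteValue Kbar ℝ) (ρ : ℝ) : Submodule Kbar (Kbar ⊗[K] E) :=
  ⨆ (μ : Kbar) (_ : v μ = ρ), Module.End.maxGenEigenspace (α.baseChange Kbar) μ

/-- `E_ρ := (E_K̄)_ρ ∩ E`, identifying `E` with `E ⊗ 1 ⊆ K̄ ⊗ E`. -/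
noncomputable def eRho {K : Type*} [NontriviallyNormedField K]
    {E : Type*} [AddCommGroup E] [Module K E] (α : E →ₗ[K] E)
    (Kbar : Type*) [Field Kbar] [Algebra K Kbar]
    (v : AbsoluteValue Kbar ℝ) (ρ : ℝ) : Submodule K E :=
  ((genEigSum α Kbar v ρ).restrictScalars K).comap (TensorProduct.mk K Kbar E 1)

/-- `R(α)`: the set of absolute values of the eigenvalues of `α ⊗ id` in `K̄`. -/
def rSet {K : Type*} [NontriviallyNormedField K]
    {E : Type*} [AddCommGroup E] [Module K E] (α : E →ₗ[K] E)
    (Kbar : Type*) [Field Kbar] [Algebra K Kbar]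
    (v : AbsoluteValue Kbar ℝ) : Set ℝ :=
  {r | ∃ μ : Kbar, Module.End.HasEigenvalue (α.baseChange Kbar) μ ∧ v μ = r}

open Polynomial

section PartA

variable {K : Type*} [NontriviallyNormedField K] [CompleteSpace K]

/-- Pull back an absolute value along an injective ring hom. -/
noncomputable def AbsoluteValue.pullback {L M : Type*} [Field L] [Field M]
    (v : AbsoluteValue M ℝ) (f : L →+* M) : AbsoluteValue L ℝ where
  toFun x := v (f x)
  map_mul' x y := by simp [map_mul]
  nonneg' x := v.nonneg _
  eq_zero' x := by simp [_root_.map_eq_zero v, _root_.map_eq_zero f]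
  add_le' x y := by simpa using v.add_le (f x) (f y)

theorem absval_le_absval {L : Type*} [Field L] [Algebra K L] [FiniteDimensional K L]
    (w w' : AbsoluteValue L ℝ)
    (hw : ∀ c : K, w (algebraMap K L c) = ‖c‖) (hw' : ∀ c : K, w' (algebraMap K L c) = ‖c‖)
    (x : L) : w' x ≤ w x := by
  -- set up normed space structures
  letI : Algebra K (WithAbs w) := inferInstance
  letI : Algebra K (WithAbs w') := inferInstance
  letI : NormedSpace K (WithAbs w) := by
    refine ⟨fun c y => ?_⟩
    show w (c • y.ofAbs) ≤ ‖c‖ * w y.ofAbs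
    rw [Algebra.smul_def, map_mul]
    rw [hw c]
  letI : NormedSpace K (WithAbs w') := by
    refine ⟨fun c y => ?_⟩
    show w' (c • y.ofAbs) ≤ ‖c‖ * w' y.ofAbs
    rw [Algebra.smul_def, map_mul]
    rw [hw' c]
  haveI : FiniteDimensional K (WithAbs w) := inferInstance
  let f : WithAbs w →ₗ[K] WithAbs w' :=
    { toFun := fun y => WithAbs.toAbs w' y.ofAbs, map_add' := fun _ _ => rfl, map_smul' := fun _ _ => rfl }
  have hcont : Continuous f := f.continuous_of_finiteDimensional
  obtain ⟨C, hC, hbound⟩ := SemilinearMapClass.bound_of_continuous f hcont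
  have hb : ∀ y : L, w' y ≤ C * w y := fun y => hbound (WithAbs.toAbs w y)
  -- now the root trick
  rcases eq_or_ne x 0 with rfl | hx
  · simp
  have hwx : 0 < w x := w.pos hx
  have key : ∀ n : ℕ, 1 ≤ n → w' x ≤ C ^ ((n : ℝ)⁻¹) * w x := by
    intro n hn
    have hn' : (0:ℝ) < n := by exact_mod_cast hn
    have h1 : (w' x) ^ n ≤ C * (w x) ^ n := by
      simpa [map_pow] using hb (x ^ n)
    have h2 : w' x = ((w' x) ^ n) ^ ((n : ℝ)⁻¹) := by
      rw [← Real.rpow_natCast (w' x) n, ← Real.rpow_mul (w'.nonneg x),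
        mul_inv_cancel₀ hn'.ne', Real.rpow_one]
    rw [h2]
    calc ((w' x) ^ n) ^ ((n : ℝ)⁻¹) ≤ (C * (w x) ^ n) ^ ((n : ℝ)⁻¹) := by
          apply Real.rpow_le_rpow (by positivity) h1 (by positivity)
      _ = C ^ ((n : ℝ)⁻¹) * w x := by
          rw [Real.mul_rpow hC.le (by positivity), ← Real.rpow_natCast (w x) n,
            ← Real.rpow_mul (w.nonneg x), mul_inv_cancel₀ hn'.ne', Real.rpow_one]
  have hlim : Filter.Tendsto (fun n : ℕ => C ^ ((n : ℝ)⁻¹) * w x) Filter.atTop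
      (nhds (1 * w x)) := by
    apply Filter.Tendsto.mul_const
    have h0 : Filter.Tendsto (fun n : ℕ => ((n : ℝ)⁻¹)) Filter.atTop (nhds 0) :=
      tendsto_inv_atTop_nhds_zero_nat
    have hcont2 : ContinuousAt (fun t : ℝ => C ^ t) 0 :=
      Real.continuousAt_const_rpow hC.ne'
    simpa [Real.rpow_zero, Function.comp_def] using hcont2.tendsto.comp h0
  rw [one_mul] at hlim
  exact ge_of_tendsto hlim (Filter.eventually_atTop.2 ⟨1, key⟩)

theorem absval_ext {L : Type*} [Field L] [Algebra K L] [FiniteDimensional K L]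
    (w w' : AbsoluteValue L ℝ)
    (hw : ∀ c : K, w (algebraMap K L c) = ‖c‖) (hw' : ∀ c : K, w' (algebraMap K L c) = ‖c‖) :
    w = w' := by
  ext x
  exact le_antisymm (absval_le_absval w' w hw' hw x) (absval_le_absval w w' hw hw' x)

/-- Conjugate elements over a complete field have equal absolute value. -/
theorem val_eq_val_of_conj {Kbar : Type*} [Field Kbar] [Algebra K Kbar]
    (v : AbsoluteValue Kbar ℝ) (hv : ∀ x : K, v (algebraMap K Kbar x) = ‖x‖)
    {p : K[X]} (hp : Irreducible p) {μ μ' : Kbar}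
    (h : Polynomial.eval₂ (algebraMap K Kbar) μ p = 0)
    (h' : Polynomial.eval₂ (algebraMap K Kbar) μ' p = 0) :
    v μ = v μ' := by
  haveI : Fact (Irreducible p) := ⟨hp⟩
  let L := AdjoinRoot p
  haveI : FiniteDimensional K L := PowerBasis.finite (AdjoinRoot.powerBasis hp.ne_zero)
  let φ : L →+* Kbar := AdjoinRoot.lift (algebraMap K Kbar) μ h
  let φ' : L →+* Kbar := AdjoinRoot.lift (algebraMap K Kbar) μ' h'
  let w : AbsoluteValue L ℝ := v.pullback φ
  let w' : AbsoluteValue L ℝ := v.pullback φ'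
  have hw : ∀ c : K, w (algebraMap K L c) = ‖c‖ := by
    intro c
    show v (φ (algebraMap K L c)) = ‖c‖
    rw [AdjoinRoot.algebraMap_eq, AdjoinRoot.lift_of, hv]
  have hw' : ∀ c : K, w' (algebraMap K L c) = ‖c‖ := by
    intro c
    show v (φ' (algebraMap K L c)) = ‖c‖
    rw [AdjoinRoot.algebraMap_eq, AdjoinRoot.lift_of, hv]
  have := absval_ext w w' hw hw'
  have hroot := congrArg (fun u : AbsoluteValue L ℝ => u (AdjoinRoot.root p)) this
  have e1 : φ (AdjoinRoot.root p) = μ := AdjoinRoot.lift_root h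
  have e2 : φ' (AdjoinRoot.root p) = μ' := AdjoinRoot.lift_root h'
  have : v (φ (AdjoinRoot.root p)) = v (φ' (AdjoinRoot.root p)) := hroot
  rwa [e1, e2] at this

end PartA

open Polynomial

section Kers

variable {F V : Type*} [Field F] [AddCommGroup V] [Module F V]

lemma ker_aeval_mono (f : Module.End F V) {p q : F[X]} (h : p ∣ q) :
    LinearMap.ker (aeval f p) ≤ LinearMap.ker (aeval f q) := by
  obtain ⟨r, rfl⟩ := h
  intro x hx
  rw [LinearMap.mem_ker] at hx ⊢
  rw [mul_comm, map_mul, Module.End.mul_apply, hx, map_zero]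

lemma ker_aeval_finset_prod (f : Module.End F V) {ι : Type*} [DecidableEq ι] (s : Finset ι)
    (q : ι → F[X]) (h : Set.Pairwise ↑s (Function.onFun IsCoprime q)) :
    LinearMap.ker (aeval f (∏ i ∈ s, q i)) = ⨆ i ∈ s, LinearMap.ker (aeval f (q i)) := by
  induction s using Finset.induction_on with
  | empty => simp [Module.End.one_eq_id]
  | @insert a s ha ih =>
    have hcop : IsCoprime (q a) (∏ i ∈ s, q i) :=
      IsCoprime.prod_right fun i hi =>
        h (Finset.mem_insert_self a s) (Finset.mem_insert_of_mem hi)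
          (fun he => ha (he ▸ hi))
    rw [Finset.prod_insert ha,
      ← Polynomial.sup_ker_aeval_eq_ker_aeval_mul_of_coprime f hcop,
      ih (h.mono (by intro x hx; exact Finset.mem_coe.2 (Finset.mem_insert_of_mem (Finset.mem_coe.1 hx)))), Finset.iSup_insert]

end Kers

section Charpoly

variable {F V : Type*} [Field F] [AddCommGroup V] [Module F V] [FiniteDimensional F V]

lemma eval_charpoly (f : Module.End F V) (μ : F) :
    (LinearMap.charpoly f).eval μ = LinearMap.det (μ • (1 : Module.End F V) - f) := by
  classical
  let b := Module.Free.chooseBasis F V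
  let M := LinearMap.toMatrix b b f
  have h1 : LinearMap.charpoly f = M.charpoly := (LinearMap.charpoly_toMatrix f b).symm
  have h2 : (M.charpoly).eval μ = ((M.charmatrix).map (evalRingHom μ)).det := by
    rw [Matrix.charpoly]
    rw [show (eval μ) M.charmatrix.det = (evalRingHom μ) M.charmatrix.det from rfl]
    rw [RingHom.map_det, RingHom.mapMatrix_apply]
  have h3 : (M.charmatrix).map (evalRingHom μ) = μ • (1 : Matrix _ _ F) - M := by
    ext i j
    by_cases hij : i = j <;>
      simp [hij, Matrix.charmatrix_apply, Matrix.map_apply, Matrix.one_apply,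
        Matrix.diagonal_apply, Matrix.sub_apply, Matrix.smul_apply, smul_eq_mul, mul_one]
  have h4 : LinearMap.toMatrix b b (μ • (1 : Module.End F V) - f)
      = μ • (1 : Matrix _ _ F) - M := by
    rw [map_sub, map_smul]
    congr 1
    rw [Module.End.one_eq_id, LinearMap.toMatrix_id]
  rw [h1, h2, h3, ← h4, LinearMap.det_toMatrix]

lemma hasEigenvalue_iff_isRoot_charpoly (f : Module.End F V) (μ : F) :
    f.HasEigenvalue μ ↔ (LinearMap.charpoly f).IsRoot μ := by
  constructor
  · intro h
    have h1 : (minpoly F f).IsRoot μ := Module.End.isRoot_of_hasEigenvalue h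
    obtain ⟨g, hg⟩ := LinearMap.minpoly_dvd_charpoly f
    rw [IsRoot.def] at h1 ⊢
    rw [hg, eval_mul, h1, zero_mul]
  · intro h
    by_contra hne
    have hbot : Module.End.eigenspace f μ = ⊥ := not_not.1 hne
    have hker : LinearMap.ker (f - μ • 1) = ⊥ := by
      rw [← hbot]
      ext x
      simp [Module.End.mem_eigenspace_iff, LinearMap.mem_ker, sub_eq_zero]
    have hinj : Function.Injective ⇑(f - μ • (1 : Module.End F V)) := LinearMap.ker_eq_bot.1 hker
    have hsurj : Function.Surjective ⇑(f - μ • (1 : Module.End F V)) :=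
      (LinearMap.injective_iff_surjective).1 hinj
    have hunit : IsUnit (f - μ • (1 : Module.End F V)) :=
      (Module.End.isUnit_iff _).2 ⟨hinj, hsurj⟩
    have hdet : IsUnit (LinearMap.det (f - μ • (1 : Module.End F V))) :=
      LinearMap.isUnit_det _ hunit
    have : (LinearMap.charpoly f).eval μ ≠ 0 := by
      rw [eval_charpoly]
      have hrw : μ • (1 : Module.End F V) - f = (-1 : F) • (f - μ • 1) := by
        rw [neg_smul, one_smul, neg_sub]
      rw [hrw, LinearMap.det_smul]
      exact mul_ne_zero (pow_ne_zero _ (by norm_num)) hdet.ne_zero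
    exact this h

end Charpoly

section BC

open TensorProduct

variable {K : Type*} [Field K] (Kbar : Type*) [Field Kbar] [Algebra K Kbar]
variable {E F : Type*} [AddCommGroup E] [Module K E] [AddCommGroup F] [Module K F]

lemma range_baseChange_subtype (N : Submodule K E) :
    LinearMap.range ((N.subtype).baseChange Kbar) = N.baseChange Kbar := by
  apply le_antisymm
  · rintro _ ⟨z, rfl⟩
    induction z using TensorProduct.induction_on with
    | zero => simp
    | tmul a n => simpa using Submodule.tmul_mem_baseChange_of_mem a n.2
    | add x y hx hy => rw [map_add]; exact Submodule.add_mem _ hx hy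
  · rw [Submodule.baseChange_eq_span, Submodule.span_le]
    rintro z hz
    rw [Submodule.map_coe] at hz
    obtain ⟨m, hm, rfl⟩ := hz
    exact ⟨1 ⊗ₜ ⟨m, hm⟩, rfl⟩

lemma ker_baseChange (u : E →ₗ[K] F) :
    LinearMap.ker (u.baseChange Kbar) = (LinearMap.ker u).baseChange Kbar := by
  obtain ⟨C, hC⟩ := Submodule.exists_isCompl (LinearMap.ker u)
  have hker : LinearMap.ker (u.comp C.subtype) = ⊥ := by
    ext c
    simp only [LinearMap.mem_ker, LinearMap.comp_apply, Submodule.mem_bot]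
    constructor
    · intro hc
      have h1 : (c : E) ∈ LinearMap.ker u ⊓ C := ⟨hc, c.2⟩
      rw [hC.inf_eq_bot] at h1
      exact Subtype.ext h1
    · rintro rfl; simp
  obtain ⟨g, hg⟩ := (u.comp C.subtype).exists_leftInverse_of_injective hker
  set π : E →ₗ[K] E := C.subtype ∘ₗ (g ∘ₗ u) with hπdef
  have hρmem : ∀ x : E, x - π x ∈ LinearMap.ker u := by
    intro x
    have hx : x ∈ LinearMap.ker u ⊔ C := by rw [hC.sup_eq_top]; trivial
    obtain ⟨k, hk, c, hc, hkc⟩ := Submodule.mem_sup.1 hx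
    have hπx : π x = c := by
      have h1 : u x = (u.comp C.subtype) ⟨c, hc⟩ := by
        simp only [LinearMap.comp_apply, Submodule.subtype_apply]
        rw [← hkc, map_add, (LinearMap.mem_ker).1 hk, zero_add]
      have h2 : g (u x) = ⟨c, hc⟩ := by
        rw [h1, ← LinearMap.comp_apply, hg]; rfl
      simp [hπdef, h2]
    rw [LinearMap.mem_ker, map_sub, hπx, ← hkc, map_add,
      (LinearMap.mem_ker).1 hk, zero_add, sub_self]
  set ρ : E →ₗ[K] E := LinearMap.id - π with hρdef
  apply le_antisymm
  · intro z hz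
    have hid : π.baseChange Kbar + ρ.baseChange Kbar = LinearMap.id := by
      rw [← LinearMap.baseChange_add]
      rw [hρdef, add_sub_cancel, LinearMap.baseChange_id]
    have hz1 : (π.baseChange Kbar) z = 0 := by
      have hcomp : π = (C.subtype ∘ₗ g) ∘ₗ u := by rw [hπdef, LinearMap.comp_assoc]
      rw [hcomp, LinearMap.baseChange_comp, LinearMap.comp_apply,
        (LinearMap.mem_ker).1 hz, map_zero]
    have hz2 : z = (ρ.baseChange Kbar) z := by
      have := congrArg (fun (w : Kbar ⊗[K] E →ₗ[Kbar] Kbar ⊗[K] E) => w z) hid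
      simpa [hz1] using this.symm
    rw [hz2]
    have hρfact : ρ = (LinearMap.ker u).subtype ∘ₗ
        (LinearMap.codRestrict (LinearMap.ker u) ρ (fun x => by
          simpa [hρdef] using hρmem x)) := by
      ext x; rfl
    rw [hρfact, LinearMap.baseChange_comp, LinearMap.comp_apply]
    rw [← range_baseChange_subtype]
    exact ⟨_, rfl⟩
  · rw [Submodule.baseChange_eq_span, Submodule.span_le]
    rintro z hz
    rw [Submodule.map_coe] at hz
    obtain ⟨m, hm, rfl⟩ := hz
    simp only [SetLike.mem_coe, LinearMap.mem_ker, TensorProduct.mk_apply,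
      LinearMap.baseChange_tmul]
    rw [(LinearMap.mem_ker).1 hm, TensorProduct.tmul_zero]

lemma mk_one_injective : Function.Injective (TensorProduct.mk K Kbar E 1) := by
  have h1 : LinearMap.ker (LinearMap.toSpanSingleton K Kbar 1) = ⊥ := by
    ext c
    simp [LinearMap.toSpanSingleton_apply, smul_eq_mul]
  obtain ⟨ψ, hψ⟩ := (LinearMap.toSpanSingleton K Kbar 1).exists_leftInverse_of_injective h1
  have hψ1 : ψ 1 = 1 := by
    have := congrArg (fun (w : K →ₗ[K] K) => w 1) hψ
    simpa [LinearMap.toSpanSingleton_apply] using this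
  let r : Kbar ⊗[K] E →ₗ[K] E :=
    (TensorProduct.lid K E).toLinearMap ∘ₗ (LinearMap.rTensor E ψ)
  have hr : ∀ x : E, r ((TensorProduct.mk K Kbar E 1) x) = x := by
    intro x
    simp [r, TensorProduct.mk_apply, LinearMap.rTensor_tmul, hψ1]
  intro x y h
  rw [← hr x, ← hr y, h]

lemma aeval_baseChange (α : Module.End K E) (q : K[X]) :
    Polynomial.aeval (α.baseChange Kbar) (q.map (algebraMap K Kbar)) =
      (Polynomial.aeval α q).baseChange Kbar := by
  have key : ∀ x : E, (Polynomial.aeval (α.baseChange Kbar) (q.map (algebraMap K Kbar)))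
      ((1 : Kbar) ⊗ₜ[K] x) = (1 : Kbar) ⊗ₜ[K] ((Polynomial.aeval α q) x) := by
    intro x
    induction q using Polynomial.induction_on' with
    | add p r hp hr =>
      rw [Polynomial.map_add, map_add, map_add, LinearMap.add_apply, LinearMap.add_apply,
        hp, hr, TensorProduct.tmul_add]
    | monomial n c =>
      rw [Polynomial.map_monomial, Polynomial.aeval_monomial, Polynomial.aeval_monomial]
      have h1 : ((α.baseChange Kbar) ^ n) ((1 : Kbar) ⊗ₜ[K] x) = (1 : Kbar) ⊗ₜ[K] ((α ^ n) x) := by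
        rw [← LinearMap.baseChange_pow, LinearMap.baseChange_tmul]
      rw [Module.End.mul_apply, Module.End.mul_apply, h1, Module.algebraMap_end_apply,
        Module.algebraMap_end_apply, TensorProduct.tmul_smul, algebraMap_smul]
  apply LinearMap.ext
  intro z
  induction z using TensorProduct.induction_on with
  | zero => simp
  | tmul a x =>
    have ha : a ⊗ₜ[K] x = a • ((1 : Kbar) ⊗ₜ[K] x) := by
      rw [TensorProduct.smul_tmul', smul_eq_mul, mul_one]
    rw [ha, map_smul, map_smul, key, LinearMap.baseChange_tmul]
  | add y z hy hz => rw [map_add, map_add, hy, hz]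

end BC

section Extra
lemma ker_aeval_C_mul {F V : Type*} [Field F] [AddCommGroup V] [Module F V]
    (f : Module.End F V) {c : F} (hc : c ≠ 0) (T : Polynomial F) :
    LinearMap.ker (Polynomial.aeval f (Polynomial.C c * T)) =
      LinearMap.ker (Polynomial.aeval f T) := by
  ext x
  simp only [map_mul, Polynomial.aeval_C, LinearMap.mem_ker, Module.End.mul_apply,
    Module.algebraMap_end_apply]
  constructor
  · intro h
    exact (smul_eq_zero.1 h).resolve_left hc
  · intro h
    rw [h, smul_zero]
end Extra



open Polynomial UniqueFactorizationMonoid in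
/-- For each `ρ ∈ R(α)`, the subspace `(E_K̄)_ρ` of `K̄ ⊗ E` is defined
over `K`, i.e. it is spanned over `K̄` by `E_ρ := (E_K̄)_ρ ∩ E`.  Consequently `E` is the
direct sum of the subspaces `E_ρ`, `ρ ∈ R(α)`, and each `E_ρ` is `α`-invariant. -/
theorem genEigSum_defined_over_K
    {K : Type*} [NontriviallyNormedField K] [IsUltrametricDist K] [CompleteSpace K]
    {E : Type*} [AddCommGroup E] [Module K E] [FiniteDimensional K E]
    (α : E →ₗ[K] E)
    {Kbar : Type*} [Field Kbar] [Algebra K Kbar] [IsAlgClosure K Kbar]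
    (v : AbsoluteValue Kbar ℝ) (hv : ∀ x : K, v (algebraMap K Kbar x) = ‖x‖) :
    (∀ ρ ∈ rSet α Kbar v,
      genEigSum α Kbar v ρ =
        Submodule.span Kbar (⇑(TensorProduct.mk K Kbar E 1) '' (eRho α Kbar v ρ : Set E))) ∧
    iSupIndep (fun ρ : ↥(rSet α Kbar v) => eRho α Kbar v ρ.1) ∧
    (⨆ ρ : ↥(rSet α Kbar v), eRho α Kbar v ρ.1) = ⊤ ∧
    (∀ ρ ∈ rSet α Kbar v, ∀ x ∈ eRho α Kbar v ρ, α x ∈ eRho α Kbar v ρ) := by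
  classical
  haveI : IsAlgClosed Kbar := IsAlgClosure.isAlgClosed K
  haveI : FiniteDimensional Kbar (Kbar ⊗[K] E) := inferInstance
  set A : K →+* Kbar := (algebraMap K Kbar) with hA
  set χ : K[X] := LinearMap.charpoly α with hχ
  have hχ0 : χ ≠ 0 := (LinearMap.charpoly_monic α).ne_zero
  set nf : Multiset K[X] := normalizedFactors χ with hnf
  set s : Finset K[X] := nf.toFinset with hs
  set rv : K[X] → ℝ := fun p =>
    if h : ∃ μ : Kbar, ((p.map A).IsRoot μ) then v h.choose else 0 with hrv
  set Rf : Finset ℝ := s.image rv with hRf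
  set q : ℝ → K[X] := fun ρ => ∏ p ∈ s.filter (fun p => rv p = ρ), p ^ nf.count p with hq
  set n : ℕ := Module.finrank Kbar (Kbar ⊗[K] E) with hn
  -- basic facts about factors
  have H_irr : ∀ p ∈ nf, Irreducible p := fun p hp => irreducible_of_normalized_factor p hp
  have H_norm : ∀ p ∈ nf, normalize p = p := fun p hp => normalize_normalized_factor p hp
  have H_ne0 : ∀ p ∈ nf, p ≠ 0 := fun p hp => (H_irr p hp).ne_zero
  have H_rootex : ∀ p ∈ nf, ∃ μ : Kbar, (p.map A).IsRoot μ := by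
    intro p hp
    apply IsAlgClosed.exists_root
    have h1 : 0 < p.degree := degree_pos_of_irreducible (H_irr p hp)
    have h2 : (p.map A).degree = p.degree := degree_map_eq_of_injective A.injective p
    rw [h2]
    exact h1.ne'
  have H_rv : ∀ p ∈ nf, ∀ μ : Kbar, (p.map A).IsRoot μ → v μ = rv p := by
    intro p hp μ hμ
    have hex : ∃ μ' : Kbar, (p.map A).IsRoot μ' := ⟨μ, hμ⟩
    rw [hrv]
    dsimp only
    rw [dif_pos hex]
    refine val_eq_val_of_conj v hv (H_irr p hp) ?_ ?_
    · rw [← Polynomial.eval_map]; exact hμ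
    · rw [← Polynomial.eval_map]; exact hex.choose_spec
  have H_ann : Polynomial.aeval α nf.prod = 0 := by
    obtain ⟨u, hu⟩ := prod_normalizedFactors hχ0
    have h0 : Polynomial.aeval α χ = 0 := LinearMap.aeval_self_charpoly α
    rw [← hu, map_mul] at h0
    exact (IsUnit.mul_left_eq_zero (IsUnit.map (Polynomial.aeval α) u.isUnit)).1 h0
  have H_rootiff : ∀ μ : Kbar, (χ.map A).IsRoot μ ↔ ∃ p ∈ nf, (p.map A).IsRoot μ := by
    intro μ
    obtain ⟨u, hu⟩ := prod_normalizedFactors hχ0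
    constructor
    · intro h
      rw [← hu, Polynomial.map_mul, IsRoot.def, eval_mul] at h
      rcases mul_eq_zero.1 h with h1 | h1
      · rw [Polynomial.map_multiset_prod, eval_multiset_prod] at h1
        obtain hz := Multiset.prod_eq_zero_iff.1 h1
        rw [Multiset.map_map, Multiset.mem_map] at hz
        obtain ⟨p, hp, hev⟩ := hz
        exact ⟨p, hp, hev⟩
      · exfalso
        obtain ⟨r, hr, hCr⟩ := Polynomial.isUnit_iff.1 u.isUnit
        rw [← hCr, Polynomial.map_C, eval_C] at h1
        exact (map_ne_zero_iff A A.injective).2 (hr.ne_zero) h1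
    · rintro ⟨p, hp, hroot⟩
      have hdvd : p ∣ χ := dvd_of_mem_normalizedFactors hp
      obtain ⟨r, hr⟩ := hdvd
      rw [IsRoot.def, hr, Polynomial.map_mul, eval_mul, IsRoot.def.1 hroot, zero_mul]
  have Heig : ∀ μ : Kbar, Module.End.HasEigenvalue (α.baseChange Kbar) μ ↔
      (χ.map A).IsRoot μ := by
    intro μ
    rw [hasEigenvalue_iff_isRoot_charpoly, LinearMap.charpoly_baseChange]
  have H_RfS : rSet α Kbar v = ↑Rf := by
    ext ρ
    constructor
    · rintro ⟨μ, hμeig, rfl⟩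
      obtain ⟨p, hp, hroot⟩ := (H_rootiff μ).1 ((Heig μ).1 hμeig)
      have : v μ = rv p := H_rv p hp μ hroot
      rw [this]
      exact Finset.mem_coe.2 (Finset.mem_image_of_mem rv (Multiset.mem_toFinset.2 hp))
    · intro hρ
      obtain ⟨p, hpS, hrvp⟩ := Finset.mem_image.1 (Finset.mem_coe.1 hρ)
      have hp : p ∈ nf := Multiset.mem_toFinset.1 hpS
      obtain ⟨μ, hroot⟩ := H_rootex p hp
      refine ⟨μ, (Heig μ).2 ((H_rootiff μ).2 ⟨p, hp, hroot⟩), ?_⟩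
      rw [H_rv p hp μ hroot, hrvp]
  have Hq0 : ∀ ρ, q ρ ≠ 0 := by
    intro ρ
    rw [hq]
    refine Finset.prod_ne_zero_iff.2 fun p hp => ?_
    exact pow_ne_zero _ (H_ne0 p (Multiset.mem_toFinset.1 (Finset.mem_filter.1 hp).1))
  have H_cop : ∀ ρ σ, ρ ≠ σ → IsCoprime (q ρ) (q σ) := by
    intro ρ σ hne
    apply isCoprime_of_irreducible_dvd
    · intro ⟨h1, _⟩; exact Hq0 ρ h1
    · intro z hz hzρ hzσ
      have hzp : Prime z := (UniqueFactorizationMonoid.irreducible_iff_prime).1 hz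
      obtain ⟨p, hpmem, hzdvd⟩ := hzp.exists_mem_finset_dvd hzρ
      obtain ⟨p', hpmem', hzdvd'⟩ := hzp.exists_mem_finset_dvd hzσ
      have hp : p ∈ nf := Multiset.mem_toFinset.1 (Finset.mem_filter.1 hpmem).1
      have hp' : p' ∈ nf := Multiset.mem_toFinset.1 (Finset.mem_filter.1 hpmem').1
      have hzdp : z ∣ p := hzp.dvd_of_dvd_pow hzdvd
      have hzdp' : z ∣ p' := hzp.dvd_of_dvd_pow hzdvd'
      have ha : Associated p p' :=
        ((hz.associated_of_dvd (H_irr p hp) hzdp).symm.trans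
          (hz.associated_of_dvd (H_irr p' hp') hzdp'))
      have : p = p' := by
        rw [← H_norm p hp, ← H_norm p' hp']
        exact normalize_eq_normalize ha.dvd ha.symm.dvd
      apply hne
      rw [← (Finset.mem_filter.1 hpmem).2, ← (Finset.mem_filter.1 hpmem').2, this]
  have HqP : ∏ ρ ∈ Rf, q ρ = nf.prod := by
    rw [hq, hRf]
    rw [Finset.prod_fiberwise_of_maps_to (fun p hp => Finset.mem_image_of_mem rv hp)
      (fun p => p ^ nf.count p)]
    exact (Finset.prod_multiset_count nf).symm
  -- kernels over K sum to the whole space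
  have Hker_top : (⨆ ρ ∈ Rf, LinearMap.ker (Polynomial.aeval α (q ρ))) = ⊤ := by
    rw [← ker_aeval_finset_prod α Rf q (fun ρ _ σ _ hne => H_cop ρ σ hne), HqP, H_ann,
      LinearMap.ker_zero]
  -- the kernels over Kbar, bounded by genEigSum
  have HNM : ∀ ρ : ℝ,
      LinearMap.ker (Polynomial.aeval (α.baseChange Kbar) ((q ρ).map A)) ≤
        genEigSum α Kbar v ρ := by
    intro ρ
    have hqb0 : (q ρ).map A ≠ 0 := (Polynomial.map_ne_zero_iff A.injective).2 (Hq0 ρ)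
    have hsplit : Splits ((q ρ).map A) := IsAlgClosed.splits _
    have heq := hsplit.eq_prod_roots
    have hC : ((q ρ).map A).leadingCoeff ≠ 0 := leadingCoeff_ne_zero.2 hqb0
    have hroots_val : ∀ μ ∈ ((q ρ).map A).roots, v μ = ρ := by
      intro μ hμ
      have hroot : ((q ρ).map A).IsRoot μ := (Polynomial.mem_roots'.1 hμ).2
      have hexp : (q ρ).map A = ∏ p ∈ s.filter (fun p => rv p = ρ), (p.map A) ^ nf.count p := by
        rw [hq]
        dsimp only
        rw [Polynomial.map_prod]
        refine Finset.prod_congr rfl fun p _ => ?_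
        rw [Polynomial.map_pow]
      rw [IsRoot.def, hexp, eval_prod] at hroot
      obtain ⟨p, hpmem, hev⟩ := Finset.prod_eq_zero_iff.1 hroot
      have hp : p ∈ nf := Multiset.mem_toFinset.1 (Finset.mem_filter.1 hpmem).1
      have hm0 : nf.count p ≠ 0 := Multiset.count_ne_zero.2 hp
      rw [eval_pow, pow_eq_zero_iff hm0] at hev
      rw [H_rv p hp μ hev]
      exact (Finset.mem_filter.1 hpmem).2
    calc LinearMap.ker (Polynomial.aeval (α.baseChange Kbar) ((q ρ).map A))
        = LinearMap.ker (Polynomial.aeval (α.baseChange Kbar)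
            ((((q ρ).map A).roots.map fun a => X - C a).prod) ) := by
          conv_lhs => rw [heq]
          rw [ker_aeval_C_mul _ hC]
      _ = LinearMap.ker (Polynomial.aeval (α.baseChange Kbar)
            (∏ μ ∈ ((q ρ).map A).roots.toFinset,
              (X - C μ) ^ (((q ρ).map A).roots.count μ))) := by
          rw [Finset.prod_multiset_map_count]
      _ = ⨆ μ ∈ ((q ρ).map A).roots.toFinset,
            LinearMap.ker (Polynomial.aeval (α.baseChange Kbar)
              ((X - C μ) ^ (((q ρ).map A).roots.count μ))) := by
          refine ker_aeval_finset_prod _ _ _ fun μ hμ μ' hμ' hne => ?_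
          exact (isCoprime_X_sub_C_of_isUnit_sub (IsUnit.mk0 _ (sub_ne_zero.2 hne))).pow
      _ ≤ genEigSum α Kbar v ρ := by
          refine iSup₂_le fun μ hμ => ?_
          have hvμ : v μ = ρ := hroots_val μ (Multiset.mem_toFinset.1 hμ)
          have hk : Polynomial.aeval (α.baseChange Kbar)
              ((X - C μ) ^ (((q ρ).map A).roots.count μ)) =
              (α.baseChange Kbar - μ • 1) ^ (((q ρ).map A).roots.count μ) := by
            rw [map_pow, map_sub, Polynomial.aeval_X, Polynomial.aeval_C,
              Module.algebraMap_end_eq_smul_id, Module.End.one_eq_id]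
          rw [hk, ← Module.End.genEigenspace_nat]
          refine le_trans (Module.End.genEigenspace_le_maximal _ μ _) ?_
          simp only [genEigSum]
          exact le_iSup₂ (f := fun (μ : Kbar) (_ : v μ = ρ) =>
            Module.End.maxGenEigenspace (α.baseChange Kbar) μ) μ hvμ
  -- genEigSum is bounded by kernel of a big power
  have HMK : ∀ σ : ℝ, genEigSum α Kbar v σ ≤
      LinearMap.ker (Polynomial.aeval (α.baseChange Kbar) (((q σ).map A) ^ n)) := by
    intro σ
    simp only [genEigSum]
    refine iSup₂_le fun μ hvμ => ?_
    by_cases hb : Module.End.maxGenEigenspace (α.baseChange Kbar) μ = ⊥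
    · rw [hb]; exact bot_le
    · have heig : Module.End.HasEigenvalue (α.baseChange Kbar) μ := by
        refine Module.End.hasEigenvalue_of_hasGenEigenvalue
          (k := Module.finrank Kbar (Kbar ⊗[K] E)) ?_
        rw [Module.End.hasGenEigenvalue_iff,
          ← Module.End.maxGenEigenspace_eq_genEigenspace_finrank]
        exact hb
      obtain ⟨p, hp, hroot⟩ := (H_rootiff μ).1 ((Heig μ).1 heig)
      have hpfil : p ∈ s.filter (fun p => rv p = σ) := by
        refine Finset.mem_filter.2 ⟨Multiset.mem_toFinset.2 hp, ?_⟩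
        rw [← H_rv p hp μ hroot, hvμ]
      have hdvd1 : p ∣ q σ := by
        refine dvd_trans (dvd_pow_self p (Multiset.count_ne_zero.2 hp)) ?_
        exact Finset.dvd_prod_of_mem _ hpfil
      have hdvd2 : (X - C μ) ∣ (q σ).map A := by
        refine dvd_trans ?_ (Polynomial.map_dvd (algebraMap K Kbar) hdvd1)
        rw [Polynomial.dvd_iff_isRoot]
        exact hroot
      have hdvd3 : (X - C μ) ^ n ∣ ((q σ).map A) ^ n := pow_dvd_pow_of_dvd hdvd2 n
      have hk : Module.End.maxGenEigenspace (α.baseChange Kbar) μ =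
          LinearMap.ker (Polynomial.aeval (α.baseChange Kbar) ((X - C μ) ^ n)) := by
        rw [map_pow, map_sub, Polynomial.aeval_X, Polynomial.aeval_C,
          Module.algebraMap_end_eq_smul_id, ← Module.End.one_eq_id,
          ← Module.End.genEigenspace_nat, hn,
          ← Module.End.maxGenEigenspace_eq_genEigenspace_finrank]
      rw [hk]
      exact ker_aeval_mono _ hdvd3
  -- disjointness of the genEigSum family
  have HMdisj : ∀ ρ ∈ Rf, Disjoint (genEigSum α Kbar v ρ)
      (⨆ σ ∈ Rf.erase ρ, genEigSum α Kbar v σ) := by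
    intro ρ hρ
    have h1 : (⨆ σ ∈ Rf.erase ρ, genEigSum α Kbar v σ) ≤
        LinearMap.ker (Polynomial.aeval (α.baseChange Kbar)
          (∏ σ ∈ Rf.erase ρ, ((q σ).map A) ^ n)) := by
      refine iSup₂_le fun σ hσ => le_trans (HMK σ) ?_
      exact ker_aeval_mono _ (Finset.dvd_prod_of_mem _ hσ)
    have hcop : IsCoprime (((q ρ).map A) ^ n)
        (∏ σ ∈ Rf.erase ρ, ((q σ).map A) ^ n) := by
      refine IsCoprime.prod_right fun σ hσ => ?_
      have hσρ : ρ ≠ σ := fun h => (Finset.mem_erase.1 hσ).1 h.symm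
      have hbase : IsCoprime ((q ρ).map A) ((q σ).map A) := by
        have := (H_cop ρ σ hσρ).map (Polynomial.mapRingHom A)
        simpa [Polynomial.coe_mapRingHom] using this
      exact (hbase.pow)
    exact Disjoint.mono (HMK ρ) h1 (Polynomial.disjoint_ker_aeval_of_isCoprime _ hcop)
  -- total decomposition over Kbar
  have hNtop : (⨆ σ ∈ Rf, LinearMap.ker (Polynomial.aeval (α.baseChange Kbar)
      ((q σ).map A))) = ⊤ := by
    rw [← ker_aeval_finset_prod (α.baseChange Kbar) Rf (fun σ => (q σ).map A)
      (fun ρ _ σ _ hne => by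
        have := (H_cop ρ σ hne).map (Polynomial.mapRingHom A)
        simpa [Polynomial.coe_mapRingHom] using this)]
    have hprodmap : (∏ σ ∈ Rf, (q σ).map A) = (nf.prod).map A := by
      rw [← HqP]
      rw [Polynomial.map_prod]
    rw [hprodmap, aeval_baseChange, H_ann, ker_baseChange, LinearMap.ker_zero,
      Submodule.baseChange_top]
  -- the main identity over Kbar
  have Hmain : ∀ ρ ∈ Rf, genEigSum α Kbar v ρ =
      LinearMap.ker ((Polynomial.aeval α (q ρ)).baseChange Kbar) := by
    intro ρ hρ
    rw [← aeval_baseChange]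
    have hsplit2 : (⨆ σ ∈ Rf, LinearMap.ker (Polynomial.aeval (α.baseChange Kbar)
        ((q σ).map A))) = LinearMap.ker (Polynomial.aeval (α.baseChange Kbar) ((q ρ).map A)) ⊔
        ⨆ σ ∈ Rf.erase ρ, LinearMap.ker (Polynomial.aeval (α.baseChange Kbar) ((q σ).map A)) := by
      conv_lhs => rw [← Finset.insert_erase hρ]
      rw [Finset.iSup_insert]
    have hYM : (⨆ σ ∈ Rf.erase ρ, LinearMap.ker (Polynomial.aeval (α.baseChange Kbar)
        ((q σ).map A))) ⊓ genEigSum α Kbar v ρ = ⊥ := by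
      have hY : (⨆ σ ∈ Rf.erase ρ, LinearMap.ker (Polynomial.aeval (α.baseChange Kbar)
          ((q σ).map A))) ≤ ⨆ σ ∈ Rf.erase ρ, genEigSum α Kbar v σ :=
        iSup₂_mono fun σ _ => HNM σ
      have := (HMdisj ρ hρ).symm
      rw [disjoint_iff] at this
      refine le_bot_iff.1 ?_
      rw [← this]
      exact inf_le_inf_right _ hY
    calc genEigSum α Kbar v ρ = genEigSum α Kbar v ρ ⊓ ⊤ := by rw [inf_top_eq]
      _ = genEigSum α Kbar v ρ ⊓
          (LinearMap.ker (Polynomial.aeval (α.baseChange Kbar) ((q ρ).map A)) ⊔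
           ⨆ σ ∈ Rf.erase ρ, LinearMap.ker (Polynomial.aeval (α.baseChange Kbar)
             ((q σ).map A))) := by rw [← hNtop, hsplit2]
      _ = LinearMap.ker (Polynomial.aeval (α.baseChange Kbar) ((q ρ).map A)) ⊔
          ((⨆ σ ∈ Rf.erase ρ, LinearMap.ker (Polynomial.aeval (α.baseChange Kbar)
             ((q σ).map A))) ⊓ genEigSum α Kbar v ρ) := by
        rw [inf_comm, sup_inf_assoc_of_le _ (HNM ρ)]
      _ = LinearMap.ker (Polynomial.aeval (α.baseChange Kbar) ((q ρ).map A)) := by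
        rw [hYM, sup_bot_eq]
  -- identification of eRho
  have HeRho : ∀ ρ ∈ Rf, eRho α Kbar v ρ = LinearMap.ker (Polynomial.aeval α (q ρ)) := by
    intro ρ hρ
    ext x
    simp only [eRho, Submodule.mem_comap, Submodule.restrictScalars_mem]
    rw [Hmain ρ hρ]
    simp only [LinearMap.mem_ker, TensorProduct.mk_apply, LinearMap.baseChange_tmul]
    constructor
    · intro h
      refine mk_one_injective (K := K) Kbar (E := E) ?_
      rw [map_zero]
      exact h
    · intro h
      rw [h, TensorProduct.tmul_zero]
  have HmemRf : ∀ ρ ∈ rSet α Kbar v, ρ ∈ Rf := by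
    intro ρ hρ
    rw [H_RfS] at hρ
    exact Finset.mem_coe.1 hρ
  refine ⟨?_, ?_, ?_, ?_⟩
  · -- defined over K
    intro ρ hρS
    have hρ : ρ ∈ Rf := HmemRf ρ hρS
    rw [Hmain ρ hρ, ker_baseChange, HeRho ρ hρ]
    rw [Submodule.baseChange_eq_span]
    rw [Submodule.map_coe]
  · -- independence
    rw [iSupIndep_def]
    intro i
    obtain ⟨ρ, hρS⟩ := i
    have hρ : ρ ∈ Rf := HmemRf ρ hρS
    simp only
    rw [HeRho ρ hρ]
    have hcop : IsCoprime (q ρ) (∏ σ ∈ Rf.erase ρ, q σ) := by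
      refine IsCoprime.prod_right fun σ hσ => ?_
      exact H_cop ρ σ (fun h => (Finset.mem_erase.1 hσ).1 h.symm)
    refine Disjoint.mono_right ?_ (Polynomial.disjoint_ker_aeval_of_isCoprime α hcop)
    refine iSup₂_le fun j hne => ?_
    have hj : (j : ℝ) ∈ Rf := HmemRf j j.2
    have hjρ : (j : ℝ) ≠ ρ := fun h => hne (Subtype.ext h)
    rw [HeRho j hj]
    exact ker_aeval_mono _ (Finset.dvd_prod_of_mem _ (Finset.mem_erase.2 ⟨hjρ, hj⟩))
  · -- sup equals top
    rw [iSup_subtype]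
    have h1 : (⨆ (ρ : ℝ) (h : ρ ∈ rSet α Kbar v), eRho α Kbar v ρ) =
        ⨆ ρ ∈ Rf, eRho α Kbar v ρ := by
      rw [H_RfS]
      simp only [Finset.mem_coe]
    rw [h1]
    rw [biSup_congr HeRho]
    exact Hker_top
  · -- invariance
    intro ρ hρS x hx
    have hρ : ρ ∈ Rf := HmemRf ρ hρS
    rw [HeRho ρ hρ] at hx ⊢
    rw [LinearMap.mem_ker] at hx ⊢
    have hcomm : (Polynomial.aeval α (q ρ)) * α = α * (Polynomial.aeval α (q ρ)) := by
      have h1 : Polynomial.aeval α (q ρ * X) = Polynomial.aeval α (X * q ρ) := by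
        rw [mul_comm]
      rw [map_mul, map_mul, Polynomial.aeval_X] at h1
      exact h1
    have := congrArg (fun g : Module.End K E => g x) hcomm
    simp only [Module.End.mul_apply] at this
    rw [this, hx, map_zero]
end

section
/- Let (K,|·|) be a complete ultrametric field, E a finite-dimensional K-vector space, and α : E → E a K-linear map. For each ρ ∈ R(α) with ρ ≠ 0, there exists an ultrametric norm ‖·‖_ρ on E_ρ such that ‖α(x)‖_ρ = ρ·‖x‖_ρ for every x ∈ E_ρ. -/
open scoped TensorProduct

set_option maxHeartbeats 1000000
set_option synthInstance.maxHeartbeats 200000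

open Module

noncomputable def vnn {L : Type*} [Field L] (v : AbsoluteValue L ℝ) (c : L) : NNReal :=
  ⟨v c, v.nonneg c⟩

@[simp] lemma vnn_coe {L : Type*} [Field L] (v : AbsoluteValue L ℝ) (c : L) :
    (vnn v c : ℝ) = v c := rfl

@[simp] lemma vnn_eq_zero {L : Type*} [Field L] (v : AbsoluteValue L ℝ) {c : L} :
    vnn v c = 0 ↔ c = 0 := by
  rw [← NNReal.coe_eq_zero, vnn_coe, v.eq_zero]

@[simp] lemma vnn_mul {L : Type*} [Field L] (v : AbsoluteValue L ℝ) (a b : L) :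
    vnn v (a * b) = vnn v a * vnn v b := by
  ext; simp [v.map_mul]

@[simp] lemma vnn_zero {L : Type*} [Field L] (v : AbsoluteValue L ℝ) : vnn v 0 = 0 := by
  simp

@[simp] lemma vnn_one {L : Type*} [Field L] (v : AbsoluteValue L ℝ) : vnn v 1 = 1 := by
  ext; simp

@[simp] lemma vnn_neg {L : Type*} [Field L] (v : AbsoluteValue L ℝ) (a : L) :
    vnn v (-a) = vnn v a := by
  ext; simp [v.map_neg]

lemma vnn_add_le {L : Type*} [Field L] {v : AbsoluteValue L ℝ}
    (hna : ∀ a b : L, v (a + b) ≤ max (v a) (v b)) (a b : L) :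
    vnn v (a + b) ≤ max (vnn v a) (vnn v b) := by
  rw [← NNReal.coe_le_coe, NNReal.coe_max]
  exact hna a b

/-- On a finite-dimensional space where `g - μ` is nilpotent, there is an ultrametric
norm with `N (g x) = |μ| * N x` (when `μ ≠ 0`). -/
lemma exists_block_norm {L : Type*} [Field L] (v : AbsoluteValue L ℝ)
    (hna : ∀ a b : L, v (a + b) ≤ max (v a) (v b))
    {W : Type*} [AddCommGroup W] [Module L W] [FiniteDimensional L W]
    (g : Module.End L W) (μ : L)
    (hnil : IsNilpotent (g - algebraMap L (Module.End L W) μ)) :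
    ∃ N : W → NNReal,
      (∀ x, N x = 0 ↔ x = 0) ∧
      (∀ (c : L) (x : W), N (c • x) = vnn v c * N x) ∧
      (∀ x y, N (x + y) ≤ max (N x) (N y)) ∧
      (0 < vnn v μ → ∀ x, N (g x) = vnn v μ * N x) := by
  classical
  obtain ⟨k, hk⟩ := hnil
  set n : Module.End L W := g - algebraMap L (Module.End L W) μ with hn
  set b := Module.finBasis L W with hb
  set N₀ : W → NNReal := fun x => Finset.univ.sup fun i => vnn v (b.repr x i) with hN₀
  have hN₀le : ∀ (x : W) i, vnn v (b.repr x i) ≤ N₀ x := by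
    intro x i
    exact Finset.le_sup (f := fun i => vnn v (b.repr x i)) (Finset.mem_univ i)
  have hN₀zero : ∀ x, N₀ x = 0 ↔ x = 0 := by
    intro x
    constructor
    · intro h
      have hco : ∀ i, b.repr x i = 0 := by
        intro i
        have h1 : vnn v (b.repr x i) ≤ 0 := h ▸ hN₀le x i
        have h2 : vnn v (b.repr x i) = 0 := le_antisymm h1 zero_le
        exact (vnn_eq_zero v).mp h2
      have : b.repr x = 0 := Finsupp.ext hco
      simpa using congrArg b.repr.symm this
    · rintro rfl
      simp [hN₀]
  have hN₀smul : ∀ (c : L) (x : W), N₀ (c • x) = vnn v c * N₀ x := by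
    intro c x
    rw [hN₀, NNReal.mul_finset_sup]
    refine Finset.sup_congr rfl fun i _ => ?_
    rw [map_smul, Finsupp.smul_apply, smul_eq_mul, vnn_mul]
  have hN₀add : ∀ x y, N₀ (x + y) ≤ max (N₀ x) (N₀ y) := by
    intro x y
    refine Finset.sup_le fun i _ => ?_
    have h1 : vnn v (b.repr (x + y) i) ≤ max (vnn v (b.repr x i)) (vnn v (b.repr y i)) := by
      rw [map_add, Finsupp.add_apply]
      exact vnn_add_le hna _ _
    exact h1.trans (max_le_max (hN₀le x i) (hN₀le y i))
  set ε : NNReal := (vnn v μ)⁻¹ + 1 with hε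
  have hε0 : ε ≠ 0 := by positivity
  set N : W → NNReal := fun x => (Finset.range (k + 1)).sup fun j => ε ^ j * N₀ ((n ^ j) x)
    with hNdef
  have hterm : ∀ (x : W) (j : ℕ), j ∈ Finset.range (k + 1) →
      ε ^ j * N₀ ((n ^ j) x) ≤ N x := by
    intro x j hj
    exact Finset.le_sup (f := fun j => ε ^ j * N₀ ((n ^ j) x)) hj
  have hNzero : ∀ x, N x = 0 ↔ x = 0 := by
    intro x
    constructor
    · intro h
      have h1 : N₀ x ≤ 0 := by
        have := hterm x 0 (Finset.mem_range.mpr (Nat.succ_pos k))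
        simpa [h] using this
      exact (hN₀zero x).mp (le_antisymm h1 zero_le)
    · rintro rfl
      refine le_antisymm (Finset.sup_le fun j _ => ?_) zero_le
      simp [hN₀]
  have hNsmul : ∀ (c : L) (x : W), N (c • x) = vnn v c * N x := by
    intro c x
    rw [hNdef]
    simp only
    rw [NNReal.mul_finset_sup]
    refine Finset.sup_congr rfl fun j _ => ?_
    rw [map_smul, hN₀smul]
    ring
  have hNadd : ∀ x y, N (x + y) ≤ max (N x) (N y) := by
    intro x y
    refine Finset.sup_le fun j hj => ?_
    rw [map_add]
    calc ε ^ j * N₀ ((n ^ j) x + (n ^ j) y)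
        ≤ ε ^ j * max (N₀ ((n ^ j) x)) (N₀ ((n ^ j) y)) := by
          exact mul_le_mul_right (hN₀add _ _) _
      _ = max (ε ^ j * N₀ ((n ^ j) x)) (ε ^ j * N₀ ((n ^ j) y)) := mul_max _ _ _
      _ ≤ max (N x) (N y) := max_le_max (hterm x j hj) (hterm y j hj)
  refine ⟨N, hNzero, hNsmul, hNadd, ?_⟩
  intro hρ x
  rcases eq_or_ne x 0 with rfl | hx
  · simp [(hNzero _).mpr, map_zero, (hNzero 0).mpr rfl]
  · have hNx : 0 < N x := pos_iff_ne_zero.mpr fun h => hx ((hNzero x).mp h)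
    have hnx : n x = g x - μ • x := by
      rw [hn]; simp [Module.algebraMap_end_apply]
    have hgx : g x = μ • x + n x := by rw [hnx]; abel
    have key2 : N (n x) ≤ ε⁻¹ * N x := by
      refine Finset.sup_le fun j hj => ?_
      have hj' : (n ^ j) (n x) = (n ^ (j + 1)) x := by
        rw [pow_succ, Module.End.mul_apply]
      rw [hj']
      by_cases hjk : j + 1 ≤ k
      · have h1 : ε ^ (j + 1) * N₀ ((n ^ (j + 1)) x) ≤ N x :=
          hterm x (j + 1) (Finset.mem_range.mpr (Nat.lt_succ_of_le hjk))
        have h2 : ε⁻¹ * (ε ^ (j + 1) * N₀ ((n ^ (j + 1)) x))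
            = ε ^ j * N₀ ((n ^ (j + 1)) x) := by
          rw [pow_succ, mul_comm (ε ^ j) ε, mul_assoc, inv_mul_cancel_left₀ hε0]
        rw [← h2]
        exact mul_le_mul_right h1 _
      · have hkj : k ≤ j + 1 := le_of_not_ge hjk
        have : (n : Module.End L W) ^ (j + 1) = 0 := pow_eq_zero_of_le hkj hk
        simp [this, (hN₀zero 0).mpr rfl]
    have key3 : ε⁻¹ < vnn v μ := by
      have h1 : (vnn v μ)⁻¹ < ε := by
        rw [hε]; exact lt_add_of_pos_right _ one_pos
      have h2 : (vnn v μ)⁻¹ ≠ 0 := by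
        rw [ne_eq, inv_eq_zero]
        exact hρ.ne'
      calc ε⁻¹ < ((vnn v μ)⁻¹)⁻¹ := NNReal.inv_lt_inv h2 h1
        _ = vnn v μ := inv_inv _
    have key4 : N (n x) < N (μ • x) := by
      rw [hNsmul]
      calc N (n x) ≤ ε⁻¹ * N x := key2
        _ < vnn v μ * N x := by exact mul_lt_mul_of_pos_right key3 hNx
    have hle : N (g x) ≤ N (μ • x) := by
      rw [hgx]
      exact (hNadd _ _).trans_eq (max_eq_left key4.le)
    have hneg : N (-(n x)) = N (n x) := by
      have : -(n x) = (-1 : L) • (n x) := by simp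
      rw [this, hNsmul, vnn_neg, vnn_one, one_mul]
    have hge : N (μ • x) ≤ N (g x) := by
      have h1 : μ • x = g x + -(n x) := by rw [hgx]; abel
      have h2 := h1 ▸ hNadd (g x) (-(n x))
      rcases le_max_iff.mp h2 with h | h
      · exact h
      · rw [hneg] at h
        exact absurd (h.trans_lt key4) (lt_irrefl _)
    rw [le_antisymm hle hge, hNsmul]

lemma exists_assembled_norm {L : Type*} [Field L] [IsAlgClosed L] (v : AbsoluteValue L ℝ)
    (hna : ∀ a b : L, v (a + b) ≤ max (v a) (v b))
    {M : Type*} [AddCommGroup M] [Module L M] [FiniteDimensional L M]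
    (f : Module.End L M) (ρ : ℝ) (hρ : 0 < ρ) :
    ∃ N : M → NNReal,
      (∀ x, N x = 0 ↔ x = 0) ∧
      (∀ (c : L) (x : M), N (c • x) = vnn v c * N x) ∧
      (∀ x y, N (x + y) ≤ max (N x) (N y)) ∧
      (∀ x ∈ ⨆ (μ : L) (_ : v μ = ρ), f.maxGenEigenspace μ,
        N (f x) = NNReal.mk ρ hρ.le * N x) := by
  classical
  set W : L → Submodule L M := f.maxGenEigenspace with hW
  have hInt : DirectSum.IsInternal W :=
    DirectSum.isInternal_submodule_of_iSupIndep_of_iSup_eq_top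
      f.independent_maxGenEigenspace f.iSup_maxGenEigenspace_eq_top
  set e := LinearEquiv.ofBijective (DirectSum.coeLinearMap W) hInt with he
  have hmt : ∀ μ : L, Set.MapsTo f (W μ) (W μ) := fun μ =>
    Module.End.mapsTo_maxGenEigenspace_of_comm (Commute.refl f) μ
  set g : ∀ μ : L, Module.End L (W μ) := fun μ => f.restrict (hmt μ) with hg
  have hnil : ∀ μ : L, IsNilpotent (g μ - algebraMap L (Module.End L (W μ)) μ) := by
    intro μ
    have h0 := f.isNilpotent_restrict_maxGenEigenspace_sub_algebraMap μ
    have heq : g μ - algebraMap L (Module.End L (W μ)) μ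
        = (f - algebraMap L (Module.End L M) μ).restrict
          (Module.End.mapsTo_maxGenEigenspace_of_comm
            (Algebra.mul_sub_algebraMap_commutes f μ) μ) := by
      ext x
      simp [hg, LinearMap.restrict_apply, Module.algebraMap_end_apply]
      rfl
    rw [heq]
    exact h0
  choose Nb hNb1 hNb2 hNb3 hNb4 using fun μ : L =>
    exists_block_norm v hna (g μ) μ (hnil μ)
  have heof : ∀ (μ : L) (w : W μ), e (DirectSum.of (fun μ => ↥(W μ)) μ w) = w := fun μ w =>
    DirectSum.coeLinearMap_of W μ w
  have hesymm : ∀ (μ : L) (w : W μ), e.symm (w : M) = DirectSum.of (fun μ => ↥(W μ)) μ w := by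
    intro μ w
    rw [LinearEquiv.symm_apply_eq, heof]
  have hcomm : ∀ (x : M) (μ : L), e.symm (f x) μ = g μ (e.symm x μ) := by
    intro x μ
    have hx : x = e (e.symm x) := (e.apply_symm_apply x).symm
    rw [hx, e.symm_apply_apply]
    generalize e.symm x = ξ
    induction ξ using DirectSum.induction_on with
    | zero =>
      rw [map_zero, map_zero, map_zero, DirectSum.zero_apply, map_zero]
    | of ν w =>
      rw [heof]
      have hfw : f ↑w = ((g ν w : W ν) : M) := rfl
      rw [hfw, hesymm]
      rcases eq_or_ne μ ν with rfl | hμν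
      · rw [DirectSum.of_eq_same, DirectSum.of_eq_same]
      · rw [DirectSum.of_eq_of_ne _ _ _ hμν, DirectSum.of_eq_of_ne _ _ _ hμν,
          map_zero]
    | add ξ₁ ξ₂ h1 h2 =>
      simp only [map_add, DirectSum.add_apply]
      rw [h1, h2]
  have hvan : ∀ x ∈ (⨆ (μ : L) (_ : v μ = ρ), W μ), ∀ ν : L, v ν ≠ ρ → e.symm x ν = 0 := by
    intro x hx ν hν
    rw [iSup_subtype'] at hx
    refine Submodule.iSup_induction' (motive := fun y _ => e.symm y ν = 0) _
      (fun μ w hw => ?_) (by simp) (fun y z _ _ hy hz => ?_) hx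
    · show e.symm w ν = 0
      have hsw : e.symm w = DirectSum.of (fun μ => ↥(W μ)) μ ⟨w, hw⟩ := hesymm μ ⟨w, hw⟩
      rw [hsw, DirectSum.of_eq_of_ne _ _ _ (fun h => hν (by rw [h]; exact μ.2))]
    · show e.symm (y + z) ν = 0
      rw [map_add, DirectSum.add_apply, hy, hz, add_zero]
  set N : M → NNReal := fun x => (e.symm x).support.sup fun μ => Nb μ ((e.symm x) μ)
    with hN
  have hext : ∀ (x : M) (s : Finset L), (e.symm x).support ⊆ s →
      N x = s.sup fun μ => Nb μ ((e.symm x) μ) := by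
    intro x s hs
    refine le_antisymm (Finset.sup_le fun μ hμ =>
      Finset.le_sup (f := fun μ => Nb μ ((e.symm x) μ)) (hs hμ)) (Finset.sup_le ?_)
    intro μ hμ
    by_cases h : μ ∈ (e.symm x).support
    · exact Finset.le_sup (f := fun μ => Nb μ ((e.symm x) μ)) h
    · have h0 : (e.symm x) μ = 0 := DFinsupp.notMem_support_iff.mp h
      rw [h0, (hNb1 μ 0).mpr rfl]
      exact zero_le
  have hNzero : ∀ x, N x = 0 ↔ x = 0 := by
    intro x
    constructor
    · intro h
      have hz : e.symm x = 0 := by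
        refine DFinsupp.ext fun μ => ?_
        by_cases hμ : μ ∈ (e.symm x).support
        · have h1 : Nb μ ((e.symm x) μ) ≤ 0 :=
            h ▸ Finset.le_sup (f := fun μ => Nb μ ((e.symm x) μ)) hμ
          have h2 : Nb μ ((e.symm x) μ) = 0 := le_antisymm h1 zero_le
          rw [(hNb1 μ _).mp h2]
          rfl
        · rw [DFinsupp.notMem_support_iff.mp hμ]
          rfl
      have := congrArg e hz
      rwa [e.apply_symm_apply, map_zero] at this
    · rintro rfl
      rw [hN]
      simp
  refine ⟨N, hNzero, ?_, ?_, ?_⟩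
  · intro c x
    set s : Finset L := (e.symm x).support ∪ (e.symm (c • x)).support with hs
    rw [hext (c • x) s Finset.subset_union_right, hext x s Finset.subset_union_left,
      NNReal.mul_finset_sup]
    refine Finset.sup_congr rfl fun μ _ => ?_
    rw [map_smul, DFinsupp.smul_apply, hNb2]
  · intro x y
    set s : Finset L := (e.symm x).support ∪ (e.symm y).support with hs
    have hsub : (e.symm (x + y)).support ⊆ s := by
      rw [map_add]
      exact (DFinsupp.support_add).trans hs.ge
    rw [hext (x + y) s hsub]
    refine Finset.sup_le fun μ hμ => ?_
    have h1 : Nb μ ((e.symm (x + y)) μ) ≤ max (Nb μ ((e.symm x) μ)) (Nb μ ((e.symm y) μ)) := by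
      rw [map_add, DFinsupp.add_apply]
      exact hNb3 μ _ _
    refine h1.trans (max_le_max ?_ ?_)
    · rw [hext x s Finset.subset_union_left]
      exact Finset.le_sup (f := fun μ => Nb μ ((e.symm x) μ)) hμ
    · rw [hext y s Finset.subset_union_right]
      exact Finset.le_sup (f := fun μ => Nb μ ((e.symm y) μ)) hμ
  · intro x hx
    set s : Finset L := (e.symm x).support ∪ (e.symm (f x)).support with hs
    rw [hext (f x) s Finset.subset_union_right, hext x s Finset.subset_union_left,
      NNReal.mul_finset_sup]
    refine Finset.sup_congr rfl fun μ _ => ?_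
    rw [hcomm x μ]
    by_cases hμρ : v μ = ρ
    · have hpos : 0 < vnn v μ := by
        rw [← NNReal.coe_pos, vnn_coe, hμρ]
        exact hρ
      have hvμ : vnn v μ = NNReal.mk ρ hρ.le := by
        ext
        rw [vnn_coe, hμρ]
        rfl
      rw [hNb4 μ hpos, hvμ]
    · have h0 : (e.symm x) μ = 0 := hvan x hx μ hμρ
      rw [h0, map_zero, (hNb1 μ 0).mpr rfl, mul_zero]


lemma abs_add_le_max_of_ext {K : Type*} [NontriviallyNormedField K] [IsUltrametricDist K]
    {Kbar : Type*} [Field Kbar] [Algebra K Kbar]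
    (v : AbsoluteValue Kbar ℝ) (hv : ∀ x : K, v (algebraMap K Kbar x) = ‖x‖) :
    ∀ a b : Kbar, v (a + b) ≤ max (v a) (v b) := by
  have h1 : ∀ n : ℕ, ‖(n : WithAbs v)‖ ≤ 1 := by
    intro n
    have h2 : ‖(n : WithAbs v)‖ = v ((n : Kbar)) := rfl
    rw [h2, ← map_natCast (algebraMap K Kbar) n, hv]
    exact IsUltrametricDist.norm_natCast_le_one K n
  haveI := IsUltrametricDist.isUltrametricDist_of_forall_norm_natCast_le_one h1
  intro a b
  exact IsUltrametricDist.norm_add_le_max ((WithAbs.equiv v).symm a) ((WithAbs.equiv v).symm b)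

/-- For each nonzero `ρ ∈ R(α)` there is an ultrametric norm `N` on `E_ρ`
such that `N (α x) = ρ * N x` for all `x ∈ E_ρ`. -/
theorem exists_ultrametric_norm_on_eRho
    {K : Type*} [NontriviallyNormedField K] [IsUltrametricDist K] [CompleteSpace K]
    {E : Type*} [AddCommGroup E] [Module K E] [FiniteDimensional K E]
    (α : E →ₗ[K] E)
    {Kbar : Type*} [Field Kbar] [Algebra K Kbar] [IsAlgClosure K Kbar]
    (v : AbsoluteValue Kbar ℝ) (hv : ∀ x : K, v (algebraMap K Kbar x) = ‖x‖) :
    ∀ ρ ∈ rSet α Kbar v, ρ ≠ 0 →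
      ∃ N : E → ℝ,
        (∀ x ∈ eRho α Kbar v ρ, 0 ≤ N x) ∧
        (∀ x ∈ eRho α Kbar v ρ, (N x = 0 ↔ x = 0)) ∧
        (∀ (c : K), ∀ x ∈ eRho α Kbar v ρ, N (c • x) = ‖c‖ * N x) ∧
        (∀ x ∈ eRho α Kbar v ρ, ∀ y ∈ eRho α Kbar v ρ, N (x + y) ≤ max (N x) (N y)) ∧
        (∀ x ∈ eRho α Kbar v ρ, N (α x) = ρ * N x) := by
  classical
  intro ρ hρmem hρ0
  obtain ⟨μ₀, hμ₀eig, hμ₀v⟩ := hρmem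
  have hρpos : 0 < ρ := lt_of_le_of_ne (hμ₀v ▸ v.nonneg μ₀) (Ne.symm hρ0)
  haveI : IsAlgClosed Kbar := IsAlgClosure.isAlgClosed K
  have hna := abs_add_le_max_of_ext v hv
  obtain ⟨Nb, h1, h2, h3, h4⟩ :=
    exists_assembled_norm v hna (α.baseChange Kbar) ρ hρpos
  -- a `K`-linear retraction of `x ↦ 1 ⊗ x`
  have hone : LinearIndepOn K id ({1} : Set Kbar) :=
    (linearIndepOn_singleton_iff K).mpr one_ne_zero
  have hmem : (1 : Kbar) ∈ hone.extend (Set.subset_univ _) :=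
    hone.subset_extend _ rfl
  set b := Module.Basis.extend hone with hb
  set φ : Kbar →ₗ[K] K := b.coord ⟨1, hmem⟩ with hφ
  have hφ1 : φ 1 = 1 := by
    have hb1 : b ⟨1, hmem⟩ = 1 := Module.Basis.extend_apply_self hone ⟨1, hmem⟩
    have h := b.coord_apply ⟨1, hmem⟩ (b ⟨1, hmem⟩)
    rw [Basis.repr_self, Finsupp.single_eq_same] at h
    rw [hb1] at h
    exact h
  set ψ : Kbar ⊗[K] E →ₗ[K] E := TensorProduct.lift ((LinearMap.lsmul K E).comp φ) with hψdef
  have hψ : ∀ x : E, ψ ((1 : Kbar) ⊗ₜ[K] x) = x := by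
    intro x
    rw [hψdef, TensorProduct.lift.tmul]
    simp [hφ1]
  have hinj : ∀ x : E, (1 : Kbar) ⊗ₜ[K] x = 0 → x = 0 := by
    intro x h
    have := congrArg ψ h
    rwa [hψ, map_zero] at this
  have hsmul : ∀ (c : K) (x : E), (1 : Kbar) ⊗ₜ[K] (c • x)
      = algebraMap K Kbar c • ((1 : Kbar) ⊗ₜ[K] x) := by
    intro c x
    rw [TensorProduct.tmul_smul, algebraMap_smul]
  have hmemV : ∀ x ∈ eRho α Kbar v ρ, ((1 : Kbar) ⊗ₜ[K] x) ∈
      ⨆ (μ : Kbar) (_ : v μ = ρ), Module.End.maxGenEigenspace (α.baseChange Kbar) μ := by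
    intro x hx
    exact hx
  refine ⟨fun x => (Nb ((1 : Kbar) ⊗ₜ[K] x) : ℝ), fun x _ => NNReal.coe_nonneg _,
    ?_, ?_, ?_, ?_⟩
  · intro x _
    show (Nb ((1 : Kbar) ⊗ₜ[K] x) : ℝ) = 0 ↔ x = 0
    rw [NNReal.coe_eq_zero, h1]
    exact ⟨hinj x, by rintro rfl; rw [TensorProduct.tmul_zero]⟩
  · intro c x _
    show (Nb ((1 : Kbar) ⊗ₜ[K] (c • x)) : ℝ) = ‖c‖ * (Nb ((1 : Kbar) ⊗ₜ[K] x) : ℝ)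
    rw [hsmul, h2, NNReal.coe_mul, vnn_coe, hv]
  · intro x _ y _
    show (Nb ((1 : Kbar) ⊗ₜ[K] (x + y)) : ℝ) ≤
      max (Nb ((1 : Kbar) ⊗ₜ[K] x) : ℝ) (Nb ((1 : Kbar) ⊗ₜ[K] y) : ℝ)
    rw [TensorProduct.tmul_add]
    have := h3 ((1 : Kbar) ⊗ₜ[K] x) ((1 : Kbar) ⊗ₜ[K] y)
    rw [← NNReal.coe_le_coe, NNReal.coe_max] at this
    exact this
  · intro x hx
    have hfx : (1 : Kbar) ⊗ₜ[K] (α x) = (α.baseChange Kbar) ((1 : Kbar) ⊗ₜ[K] x) := by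
      rw [LinearMap.baseChange_tmul]
    show (Nb ((1 : Kbar) ⊗ₜ[K] (α x)) : ℝ) = ρ * (Nb ((1 : Kbar) ⊗ₜ[K] x) : ℝ)
    rw [hfx, h4 _ (hmemV x hx), NNReal.coe_mul]
    rfl
end

section
/- Let E be a finite-dimensional vector space over a complete ultrametric field (K,|·|) and α : E → E be a nilpotent K-linear map. Then for every ε > 0 there exists an ultrametric norm ‖·‖ on E with respect to which α has operator norm < ε. -/
open scoped NNReal

/-- `N` is an ultrametric norm on the `K`-vector space `E`. -/
def IsUltraNorm (K : Type*) [NormedField K] {E : Type*} [AddCommGroup E] [Module K E]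
    (N : E → ℝ) : Prop :=
  (∀ x : E, 0 ≤ N x) ∧ (∀ x : E, N x = 0 ↔ x = 0) ∧
    (∀ (c : K) (x : E), N (c • x) = ‖c‖ * N x) ∧
    ∀ x y : E, N (x + y) ≤ max (N x) (N y)

/-- A nilpotent linear self-map of a finite-dimensional vector space over a
complete ultrametric field has operator norm `< ε` with respect to a suitable ultrametric
norm, for every `ε > 0`. -/
theorem nilpotent_exists_ultrametric_norm_opNorm_lt
    {K : Type*} [NontriviallyNormedField K] [IsUltrametricDist K] [CompleteSpace K]
    {E : Type*} [AddCommGroup E] [Module K E] [FiniteDimensional K E]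
    (α : E →ₗ[K] E) (hα : IsNilpotent α) {ε : ℝ} (hε : 0 < ε) :
    ∃ N : E → ℝ, IsUltraNorm K N ∧ ∃ b, b < ε ∧ ∀ x : E, N (α x) ≤ b * N x := by
  classical
  obtain ⟨n, hn⟩ := hα
  have hn' : α ^ (n + 1) = 0 := by rw [pow_succ, hn, zero_mul]
  -- base ultrametric norm from a basis
  let bE := Module.Free.chooseBasis K E
  let M0 : E → ℝ≥0 := fun x => Finset.univ.sup fun i => ‖bE.repr x i‖₊
  have hM0zero : ∀ x : E, M0 x = 0 ↔ x = 0 := by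
    intro x
    constructor
    · intro h
      have h' : ∀ i ∈ Finset.univ, ‖bE.repr x i‖₊ = (⊥ : ℝ≥0) :=
        (Finset.sup_eq_bot_iff _ _).mp h
      have : bE.repr x = 0 := by
        ext i
        have := h' i (Finset.mem_univ i)
        simpa [nnnorm_eq_zero] using this
      simpa using bE.repr.map_eq_zero_iff.mp this
    · rintro rfl
      simp [M0]
  have hM0smul : ∀ (a : K) (x : E), M0 (a • x) = ‖a‖₊ * M0 x := by
    intro a x
    simp only [M0, map_smul]
    rw [NNReal.mul_finset_sup]
    congr 1
    ext i
    simp [nnnorm_smul]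
  have hM0add : ∀ x y : E, M0 (x + y) ≤ max (M0 x) (M0 y) := by
    intro x y
    refine Finset.sup_le fun i _ => ?_
    have h1 : ‖bE.repr (x + y) i‖₊ ≤ max ‖bE.repr x i‖₊ ‖bE.repr y i‖₊ := by
      rw [map_add]
      exact IsUltrametricDist.nnnorm_add_le_max _ _
    refine h1.trans (max_le_max ?_ ?_) <;>
      exact Finset.le_sup (f := fun j => ‖bE.repr _ j‖₊) (Finset.mem_univ i)
  -- choose scaling constant
  set c : ℝ≥0 := (ε / 2)⁻¹.toNNReal ⊔ 1 with hc
  have hc1 : (1 : ℝ≥0) ≤ c := le_sup_right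
  have hc0 : c ≠ 0 := by positivity
  have hcinv : (c : ℝ)⁻¹ < ε := by
    have h2 : (ε / 2)⁻¹ ≤ (c : ℝ) := by
      calc (ε / 2)⁻¹ = ((ε / 2)⁻¹.toNNReal : ℝ) := by
            rw [Real.coe_toNNReal]; positivity
        _ ≤ (c : ℝ) := by exact_mod_cast le_sup_left
    have hεpos : (0 : ℝ) < (ε / 2)⁻¹ := by positivity
    have : (c : ℝ)⁻¹ ≤ ε / 2 := by
      rw [← inv_inv (ε / 2)]
      exact inv_anti₀ hεpos h2
    linarith
  -- the rescaled norm
  let M : E → ℝ≥0 := fun x => (Finset.range (n + 1)).sup fun i => c ^ i * M0 ((α ^ i) x)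
  have hM0le : ∀ x : E, M0 x ≤ M x := by
    intro x
    have := Finset.le_sup (f := fun i => c ^ i * M0 ((α ^ i) x))
      (Finset.mem_range.mpr (Nat.succ_pos n))
    simpa using this
  refine ⟨fun x => (M x : ℝ), ⟨fun x => (M x).coe_nonneg, ?_, ?_, ?_⟩,
    (c : ℝ)⁻¹, hcinv, ?_⟩
  · intro x
    rw [NNReal.coe_eq_zero]
    constructor
    · intro h
      exact (hM0zero x).mp (le_antisymm (h ▸ hM0le x) zero_le)
    · rintro rfl
      refine le_antisymm (Finset.sup_le fun i _ => ?_) zero_le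
      simp [(hM0zero 0).mpr rfl]
  · intro a x
    rw [← coe_nnnorm, ← NNReal.coe_mul, NNReal.coe_inj]
    show (Finset.range (n+1)).sup (fun i => c ^ i * M0 ((α ^ i) (a • x))) = _
    rw [NNReal.mul_finset_sup]
    congr 1
    ext i
    rw [map_smul, hM0smul]
    ring
  · intro x y
    rw [← NNReal.coe_max, NNReal.coe_le_coe]
    refine Finset.sup_le fun i hi => ?_
    have h1 : M0 ((α ^ i) (x + y)) ≤ max (M0 ((α ^ i) x)) (M0 ((α ^ i) y)) := by
      rw [map_add]; exact hM0add _ _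
    rcases max_cases (M0 ((α ^ i) x)) (M0 ((α ^ i) y)) with ⟨he, _⟩ | ⟨he, _⟩ <;>
      rw [he] at h1
    · exact le_max_of_le_left ((mul_le_mul_right h1 _).trans
        (Finset.le_sup (f := fun i => c ^ i * M0 ((α ^ i) x)) hi))
    · exact le_max_of_le_right ((mul_le_mul_right h1 _).trans
        (Finset.le_sup (f := fun i => c ^ i * M0 ((α ^ i) y)) hi))
  · intro x
    have key : c * M (α x) ≤ M x := by
      rw [NNReal.mul_finset_sup]
      refine Finset.sup_le fun i hi => ?_
      rw [Finset.mem_range] at hi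
      have hcomp : (α ^ i) (α x) = (α ^ (i + 1)) x := by
        rw [pow_succ]; rfl
      rcases Nat.lt_or_ge (i + 1) (n + 1) with h | h
      · calc c * (c ^ i * M0 ((α ^ i) (α x)))
            = c ^ (i + 1) * M0 ((α ^ (i + 1)) x) := by rw [hcomp, pow_succ]; ring
          _ ≤ M x := Finset.le_sup (f := fun i => c ^ i * M0 ((α ^ i) x)) (Finset.mem_range.mpr h)
      · have : i + 1 = n + 1 := le_antisymm (Nat.succ_le_succ (Nat.lt_succ_iff.mp hi)) h
        rw [hcomp, this, hn']
        simp [(hM0zero 0).mpr rfl]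
    have : M (α x) ≤ c⁻¹ * M x := by
      rw [← inv_mul_cancel_left₀ hc0 (M (α x))]
      exact mul_le_mul_right key _
    calc ((M (α x) : ℝ)) ≤ ((c⁻¹ * M x : ℝ≥0) : ℝ) := by exact_mod_cast this
      _ = (c : ℝ)⁻¹ * (M x : ℝ) := by push_cast; ring
end

section
/- Let E be a finite-dimensional vector space over a complete ultrametric field (K,|·|), α : E → E a K-linear map, ε > 0, and E_0 := {x ∈ E : α^n(x) = 0 for some n ∈ ℕ}. Then E admits a norm ‖·‖ adapted to α such that the operator norm of α|_{E_0} with respect to ‖·‖ is < ε. -/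
open scoped TensorProduct

/-- A norm `N` on `E` is adapted to `α` if it is ultrametric, if the norm of a sum of vectors
taken from the distinct subspaces `E_ρ`, `ρ ∈ R(α)`, is the maximum of their norms, and if
`N (α x) = ρ * N x` for all `x ∈ E_ρ` and `0 ≠ ρ ∈ R(α)`. -/
def IsAdaptedNorm {K : Type*} [NontriviallyNormedField K]
    {E : Type*} [AddCommGroup E] [Module K E] (α : E →ₗ[K] E)
    {Kbar : Type*} [Field Kbar] [Algebra K Kbar]
    (v : AbsoluteValue Kbar ℝ) (N : E → ℝ) : Prop :=
  IsUltraNorm K N ∧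
  (∀ (s : Finset ℝ) (hs : s.Nonempty) (x : ℝ → E), ↑s ⊆ rSet α Kbar v →
    (∀ ρ ∈ s, x ρ ∈ eRho α Kbar v ρ) →
    N (∑ ρ ∈ s, x ρ) = s.sup' hs fun ρ => N (x ρ)) ∧
  (∀ ρ ∈ rSet α Kbar v, ρ ≠ 0 → ∀ x ∈ eRho α Kbar v ρ, N (α x) = ρ * N x)


open Filter Topology Module

/-- An absolute value bounded by 1 on the image of ℕ is nonarchimedean. -/
lemma AbsoluteValue.isNonarch_of_natCast_le_one {L : Type*} [Field L]
    (v : AbsoluteValue L ℝ) (h1 : ∀ n : ℕ, v n ≤ 1) : IsNonarchimedean v := by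
  intro x y
  set M : ℝ := max (v x) (v y) with hM
  have hM0 : 0 ≤ M := le_trans (v.nonneg x) (le_max_left _ _)
  have key : ∀ n : ℕ, v (x + y) ^ n ≤ (n + 1 : ℝ) * M ^ n := by
    intro n
    rw [← v.map_pow, add_pow]
    refine le_trans (v.sum_le _ _) ?_
    have : ∀ k ∈ Finset.range (n + 1), v (x ^ k * y ^ (n - k) * (n.choose k : L)) ≤ M ^ n := by
      intro k hk
      rw [Finset.mem_range] at hk
      have hk' : k ≤ n := Nat.lt_succ_iff.mp hk
      rw [v.map_mul, v.map_mul, v.map_pow, v.map_pow]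
      calc v x ^ k * v y ^ (n - k) * v (n.choose k : L)
          ≤ M ^ k * M ^ (n - k) * 1 := by
            refine mul_le_mul ?_ (h1 _) (v.nonneg _) (by positivity)
            exact mul_le_mul (pow_le_pow_left₀ (v.nonneg _) (le_max_left _ _) _)
              (pow_le_pow_left₀ (v.nonneg _) (le_max_right _ _) _) (by positivity) (by positivity)
        _ = M ^ n := by rw [mul_one, ← pow_add, Nat.add_sub_cancel' hk']
    refine le_trans (Finset.sum_le_sum this) ?_
    rw [Finset.sum_const, Finset.card_range, nsmul_eq_mul]
    push_cast
    exact le_rfl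
  set a := v (x + y) with ha
  have ha0 : 0 ≤ a := v.nonneg _
  rcases eq_or_lt_of_le hM0 with hMz | hMpos
  · -- M = 0
    have := key 1
    simp only [pow_one, ← hMz] at this
    have : a ≤ 0 := by linarith
    linarith [hMz]
  · have hev : ∀ᶠ n : ℕ in atTop, a ≤ ((n : ℝ) ^ (1 / (n : ℝ))) ^ 2 * M := by
      filter_upwards [eventually_ge_atTop 2] with n hn
      have hn0 : (0 : ℝ) < n := by exact_mod_cast Nat.lt_of_lt_of_le Nat.zero_lt_two hn
      have h2 : a ^ n ≤ (n : ℝ) ^ 2 * M ^ n := by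
        refine (key n).trans (mul_le_mul_of_nonneg_right ?_ (by positivity))
        have : (2 : ℝ) ≤ n := by exact_mod_cast hn
        nlinarith
      have step : a = (a ^ n) ^ (1 / (n : ℝ)) := by
        rw [← Real.rpow_natCast a n, ← Real.rpow_mul ha0, mul_one_div,
          div_self hn0.ne', Real.rpow_one]
      rw [step]
      calc (a ^ n) ^ (1 / (n : ℝ)) ≤ ((n : ℝ) ^ 2 * M ^ n) ^ (1 / (n : ℝ)) :=
            Real.rpow_le_rpow (by positivity) h2 (by positivity)
        _ = ((n : ℝ) ^ 2) ^ (1 / (n : ℝ)) * (M ^ n) ^ (1 / (n : ℝ)) :=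
            Real.mul_rpow (by positivity) (by positivity)
        _ = ((n : ℝ) ^ (1 / (n : ℝ))) ^ 2 * M := by
            rw [← Real.rpow_natCast (n : ℝ) 2, ← Real.rpow_mul hn0.le, mul_comm ((2 : ℕ) : ℝ),
              Real.rpow_mul hn0.le, Real.rpow_natCast, ← Real.rpow_natCast M n,
              ← Real.rpow_mul hM0, mul_one_div, div_self hn0.ne', Real.rpow_one]
    have T : Tendsto (fun n : ℕ => ((n : ℝ) ^ (1 / (n : ℝ))) ^ 2 * M) atTop (𝓝 (1 ^ 2 * M)) :=
      ((tendsto_rpow_div.comp tendsto_natCast_atTop_atTop).pow 2).mul_const M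
    have hle : a ≤ 1 ^ 2 * M := ge_of_tendsto T hev
    rwa [one_pow, one_mul] at hle


noncomputable section

/-- ultrametric "isosceles" helper -/
lemma ultra_add_eq {F : Type*} [AddCommGroup F] (q : F → NNReal)
    (hadd : ∀ y z, q (y + z) ≤ q y ⊔ q z) (hneg : ∀ y, q (-y) = q y)
    {a b : F} (h : q b < q a) : q (a + b) = q a := by
  refine le_antisymm ((hadd a b).trans (by simp [h.le])) ?_
  have h2 : q a ≤ q (a + b) ⊔ q b := by
    have := hadd (a + b) (-b)
    simpa [hneg] using this
  rcases le_sup_iff.mp h2 with h3 | h3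
  · exact h3
  · exact absurd h3 h.not_ge

lemma nnreal_mul_sup2 (a x y : NNReal) : a * (x ⊔ y) = a * x ⊔ a * y := by
  rcases le_total x y with h | h
  · simp [sup_eq_right.mpr h, sup_eq_right.mpr (mul_le_mul_right h a)]
  · simp [sup_eq_left.mpr h, sup_eq_left.mpr (mul_le_mul_right h a)]

lemma nnreal_mul_sup {ι : Type*} (s : Finset ι) (f : ι → NNReal) (a : NNReal) :
    s.sup (fun i => a * f i) = a * s.sup f := by
  refine (Finset.comp_sup_eq_sup_comp (a * ·) (fun x y => ?_) (by simp)).symm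
  rcases le_total x y with h | h
  · simp [sup_eq_right.mpr h, sup_eq_right.mpr (mul_le_mul_right h a)]
  · simp [sup_eq_left.mpr h, sup_eq_left.mpr (mul_le_mul_right h a)]

theorem exists_good {L : Type*} [Field L] [IsAlgClosed L] (w : AbsoluteValue L ℝ)
    (hw : IsNonarchimedean w)
    {F : Type*} [AddCommGroup F] [Module L F] [FiniteDimensional L F] (β : Module.End L F)
    (δ : NNReal) (hδ : 0 < δ) :
    ∃ NN : F → NNReal,
      (∀ y, NN y = 0 ↔ y = 0) ∧
      (∀ (c : L) (y : F), (NN (c • y) : ℝ) = w c * NN y) ∧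
      (∀ y z, NN (y + z) ≤ NN y ⊔ NN z) ∧
      (∀ (s : Finset ℝ) (y : ℝ → F),
        (∀ ρ ∈ s, y ρ ∈ ⨆ μ, ⨆ (_ : w μ = ρ), β.maxGenEigenspace μ) →
        NN (∑ ρ ∈ s, y ρ) = s.sup fun ρ => NN (y ρ)) ∧
      (∀ ρ : ℝ, ρ ≠ 0 → ∀ y ∈ (⨆ μ, ⨆ (_ : w μ = ρ), β.maxGenEigenspace μ),
        (NN (β y) : ℝ) = ρ * NN y) ∧
      (∀ y ∈ β.maxGenEigenspace 0, NN (β y) ≤ δ * NN y) := by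

  classical
  rcases subsingleton_or_nontrivial F with hF | hF
  · refine ⟨fun _ => 0, fun y => ⟨fun _ => Subsingleton.elim y 0, fun _ => rfl⟩,
      by simp, by simp, fun s y _ => ?_, by simp, by simp⟩
    exact (le_antisymm Finset.sup_const_le zero_le).symm
  -- Setup: internal direct sum of generalized eigenspaces
  have hTop : ⨆ μ, β.maxGenEigenspace μ = ⊤ := Module.End.iSup_maxGenEigenspace_eq_top β
  have hInd : iSupIndep β.maxGenEigenspace := β.independent_maxGenEigenspace
  have hInt : DirectSum.IsInternal β.maxGenEigenspace :=
    DirectSum.isInternal_submodule_of_iSupIndep_of_iSup_eq_top hInd hTop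
  set e := LinearEquiv.ofBijective (DirectSum.coeLinearMap β.maxGenEigenspace) hInt with he
  set π : L → Module.End L F := fun μ =>
    (β.maxGenEigenspace μ).subtype ∘ₗ
      (DirectSum.component L L (fun μ => β.maxGenEigenspace μ) μ) ∘ₗ e.symm.toLinearMap with hπ
  have hπ_apply : ∀ μ y, π μ y = ((e.symm y) μ : F) := fun μ y => rfl
  have hπ_mem : ∀ μ y, π μ y ∈ β.maxGenEigenspace μ := fun μ y => ((e.symm y) μ).2
  have hπ_same : ∀ μ y, y ∈ β.maxGenEigenspace μ → π μ y = y := by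
    intro μ y hy
    rw [hπ_apply, hInt.ofBijective_coeLinearMap_of_mem hy]
  have hπ_ne : ∀ (μ' μ : L), μ' ≠ μ → ∀ y, y ∈ β.maxGenEigenspace μ' → π μ y = 0 := by
    intro μ' μ hne y hy
    rw [hπ_apply]
    have := hInt.ofBijective_coeLinearMap_of_ne hne (⟨y, hy⟩ : β.maxGenEigenspace μ')
    rw [this]; rfl
  have hπ_ker : ∀ (ρ : ℝ) (μ : L), w μ ≠ ρ →
      ∀ y ∈ (⨆ μ', ⨆ (_ : w μ' = ρ), β.maxGenEigenspace μ'), π μ y = 0 := by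
    intro ρ μ hwμ y hy
    have hle : (⨆ μ', ⨆ (_ : w μ' = ρ), β.maxGenEigenspace μ') ≤ LinearMap.ker (π μ) := by
      refine iSup_le fun μ' => iSup_le fun hμ' => fun z hz => LinearMap.mem_ker.mpr ?_
      exact hπ_ne μ' μ (fun h => hwμ (h ▸ hμ')) z hz
    exact LinearMap.mem_ker.mp (hle hy)
  -- the finite set of eigenvalues
  set S : Finset L := (minpoly L β).roots.toFinset with hS
  have hSbot : ∀ μ ∉ S, β.maxGenEigenspace μ = ⊥ := by
    intro μ hμ
    by_contra hne
    have h1 : β.HasEigenvalue μ := by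
      have h2 : β.HasUnifEigenvalue μ ⊤ := hne
      exact (Module.End.hasUnifEigenvalue_iff_hasUnifEigenvalue_one (by simp)).mp h2
    rw [Module.End.hasEigenvalue_iff_isRoot] at h1
    exact hμ (Multiset.mem_toFinset.mpr ((Polynomial.mem_roots
      (minpoly.ne_zero (Algebra.IsIntegral.isIntegral (R := L) β))).mpr h1))
  have hsum : ∀ y : F, ∑ μ ∈ S, π μ y = y := by
    have key : ∀ y ∈ (⊤ : Submodule L F), ∑ μ ∈ S, π μ y = y := by
      rw [← hTop]
      intro y hy
      refine Submodule.iSup_induction _ (motive := fun z => ∑ μ ∈ S, π μ z = z) hy ?_ (by simp) ?_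
      case _ =>
        intro μ₀ z hz
        by_cases hμ₀ : μ₀ ∈ S
        · rw [Finset.sum_eq_single_of_mem μ₀ hμ₀
            (fun μ' _ hne => hπ_ne μ₀ μ' (fun h => hne h.symm) z hz)]
          exact hπ_same μ₀ z hz
        · have hz0 : z = 0 := by simpa [hSbot μ₀ hμ₀] using hz
          simp [hz0]
      case _ =>
        intro a b ha hb
        simp only [map_add, Finset.sum_add_distrib, ha, hb]
    exact fun y => key y trivial
  have hinv : ∀ μ, Set.MapsTo β (β.maxGenEigenspace μ) (β.maxGenEigenspace μ) :=
    fun μ => Module.End.mapsTo_maxGenEigenspace_of_comm (Commute.refl β) μ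
  have hcomm : ∀ μ y, π μ (β y) = β (π μ y) := by
    intro μ y
    conv_lhs => rw [← hsum y, map_sum, map_sum]
    by_cases hμ : μ ∈ S
    · rw [Finset.sum_eq_single_of_mem μ hμ
        (fun μ' _ hne => hπ_ne μ' μ hne _ (hinv μ' (hπ_mem μ' y)))]
      exact hπ_same μ _ (hinv μ (hπ_mem μ y))
    · have h0 : π μ y = 0 := by
        have := hπ_mem μ y
        rw [hSbot μ hμ] at this
        simpa using this
      rw [Finset.sum_eq_zero fun μ' hμ' => hπ_ne μ' μ (fun h => hμ (h ▸ hμ')) _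
        (hinv μ' (hπ_mem μ' y)), h0, map_zero]
  -- coordinate norm
  set D := finrank L F with hD
  have hDpos : 0 < D := finrank_pos
  set bF := finBasis L F with hbF
  set wn : L → NNReal := fun a => ⟨w a, w.nonneg a⟩ with hwn
  have wn_zero : ∀ a, wn a = 0 ↔ a = 0 := by
    intro a
    rw [← w.eq_zero (x := a)]
    exact Subtype.ext_iff
  have wn_mul : ∀ a b, wn (a * b) = wn a * wn b := fun a b => Subtype.ext (w.map_mul a b)
  have wn_neg : ∀ a, wn (-a) = wn a := fun a => Subtype.ext (w.map_neg a)
  set c : F → NNReal := fun y => Finset.univ.sup fun i => wn (bF.repr y i) with hc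
  have c_zero : ∀ y, c y = 0 ↔ y = 0 := by
    intro y
    rw [hc]
    constructor
    · intro h
      have : ∀ i, wn (bF.repr y i) = 0 := by
        intro i
        exact le_antisymm ((Finset.le_sup (Finset.mem_univ i)).trans h.le) zero_le
      have : bF.repr y = 0 := by
        ext i
        exact (wn_zero _).mp (this i)
      simpa using congrArg bF.repr.symm this
    · rintro rfl
      simp only [map_zero]
      exact le_antisymm (Finset.sup_le fun i _ => by simp [(wn_zero 0).mpr rfl]) zero_le
  have c_add : ∀ y z, c (y + z) ≤ c y ⊔ c z := by
    intro y z
    refine Finset.sup_le fun i _ => ?_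
    have h1 : wn (bF.repr (y + z) i) ≤ wn (bF.repr y i) ⊔ wn (bF.repr z i) := by
      rw [map_add]
      have := hw (bF.repr y i) (bF.repr z i)
      rcases le_total (w (bF.repr y i)) (w (bF.repr z i)) with h | h
      · exact le_sup_of_le_right (Subtype.coe_le_coe.mp (by rw [max_eq_right h] at this; exact this))
      · exact le_sup_of_le_left (Subtype.coe_le_coe.mp (by rw [max_eq_left h] at this; exact this))
    refine h1.trans (sup_le_sup ?_ ?_)
    · exact Finset.le_sup (f := fun i => wn (bF.repr y i)) (Finset.mem_univ i)
    · exact Finset.le_sup (f := fun i => wn (bF.repr z i)) (Finset.mem_univ i)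
  have c_smul : ∀ (a : L) y, c (a • y) = wn a * c y := by
    intro a y
    rw [hc, ← nnreal_mul_sup]
    refine Finset.sup_congr rfl fun i _ => ?_
    rw [map_smul, Finsupp.smul_apply, smul_eq_mul, wn_mul]
  -- the nilpotent parts
  set n : L → Module.End L F := fun μ => β - μ • 1 with hn
  have hnil : ∀ μ, ∀ z ∈ β.maxGenEigenspace μ, (n μ ^ D) z = 0 := by
    intro μ z hz
    have h1 : z ∈ β.genEigenspace μ (D : ℕ∞) :=
      Module.End.genEigenspace_le_genEigenspace_finrank β μ ⊤ hz
    exact Module.End.mem_genEigenspace_nat.mp h1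
  have hinv_n : ∀ μ, Set.MapsTo (n μ) (β.maxGenEigenspace μ) (β.maxGenEigenspace μ) := by
    intro μ
    exact Module.End.mapsTo_maxGenEigenspace_of_comm
      (((Commute.refl β).sub_right ((Commute.one_right β).smul_right μ))) μ
  -- the small constant
  have hne0 : (insert δ ((S.filter fun μ => wn μ ≠ 0).image wn)).Nonempty :=
    Finset.insert_nonempty _ _
  set δ0 : NNReal := (insert δ ((S.filter fun μ => wn μ ≠ 0).image wn)).min' hne0 with hδ0
  have hδ0pos : 0 < δ0 := by
    rcases Finset.mem_insert.mp (Finset.min'_mem _ hne0) with h | h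
    · rw [hδ0, h]; exact hδ
    · obtain ⟨μ, hμ, hμ2⟩ := Finset.mem_image.mp h
      rw [hδ0, ← hμ2]
      exact pos_iff_ne_zero.mpr (Finset.mem_filter.mp hμ).2
  set δ' : NNReal := δ0 / 2 with hδ'
  have hδ'pos : 0 < δ' := by
    rw [hδ']
    exact div_pos hδ0pos two_pos
  have hδ'δ : δ' ≤ δ := by
    rw [hδ']
    exact (NNReal.half_le_self _).trans (Finset.min'_le _ _ (Finset.mem_insert_self _ _))
  have hδ'lt : ∀ μ ∈ S, wn μ ≠ 0 → δ' < wn μ := by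
    intro μ hμ hμ0
    rw [hδ']
    refine lt_of_lt_of_le (half_lt_self hδ0pos) ?_
    exact Finset.min'_le _ _ (Finset.mem_insert_of_mem
      (Finset.mem_image_of_mem wn (Finset.mem_filter.mpr ⟨hμ, hμ0⟩)))
  -- the block norms
  set Nb : L → F → NNReal :=
    fun μ z => (Finset.range D).sup fun k => δ'⁻¹ ^ k * c ((n μ ^ k) z) with hNb
  have Nb_zero : ∀ μ (z : F), Nb μ z = 0 ↔ z = 0 := by
    intro μ z
    constructor
    · intro h
      have h0 : δ'⁻¹ ^ 0 * c ((n μ ^ 0) z) ≤ 0 :=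
        (Finset.le_sup (Finset.mem_range.mpr hDpos)).trans h.le
      simp only [pow_zero, one_mul, Module.End.one_apply] at h0
      exact (c_zero z).mp (le_antisymm h0 zero_le)
    · rintro rfl
      refine le_antisymm (Finset.sup_le fun k _ => ?_) zero_le |>.trans rfl
      simp [(c_zero 0).mpr rfl]
  have Nb_add : ∀ μ y z, Nb μ (y + z) ≤ Nb μ y ⊔ Nb μ z := by
    intro μ y z
    refine Finset.sup_le fun k hk => ?_
    rw [map_add]
    refine ((mul_le_mul_right (c_add _ _) _).trans ?_)
    rw [nnreal_mul_sup2]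
    refine sup_le_sup ?_ ?_
    · exact Finset.le_sup (f := fun k => δ'⁻¹ ^ k * c ((n μ ^ k) y)) hk
    · exact Finset.le_sup (f := fun k => δ'⁻¹ ^ k * c ((n μ ^ k) z)) hk
  have Nb_smul : ∀ μ (a : L) z, Nb μ (a • z) = wn a * Nb μ z := by
    intro μ a z
    rw [hNb, ← nnreal_mul_sup]
    refine Finset.sup_congr rfl fun k _ => ?_
    rw [map_smul, c_smul, mul_left_comm]
  have Nb_neg : ∀ μ z, Nb μ (-z) = Nb μ z := by
    intro μ z
    have := Nb_smul μ (-1) z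
    simpa [wn_neg, (Subtype.ext (w.map_one) : wn 1 = 1)] using this
  have Nb_nil : ∀ μ, ∀ z ∈ β.maxGenEigenspace μ, Nb μ (n μ z) ≤ δ' * Nb μ z := by
    intro μ z hz
    refine Finset.sup_le fun k hk => ?_
    have hterm : (n μ ^ k) (n μ z) = (n μ ^ (k + 1)) z := by
      rw [pow_succ, Module.End.mul_apply]
    rw [hterm]
    by_cases hkD : k + 1 < D
    · have hpow : δ'⁻¹ ^ k = δ' * δ'⁻¹ ^ (k + 1) := by
        rw [pow_succ', ← mul_assoc, mul_inv_cancel₀ hδ'pos.ne', one_mul]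
      rw [hpow, mul_assoc]
      exact mul_le_mul_right
        (Finset.le_sup (f := fun k => δ'⁻¹ ^ k * c ((n μ ^ k) z)) (Finset.mem_range.mpr hkD)) δ'
    · have hkD' : k + 1 = D := le_antisymm (Finset.mem_range.mp hk) (not_lt.mp hkD)
      rw [hkD', hnil μ z hz, (c_zero 0).mpr rfl, mul_zero]
      exact zero_le
  have Nb_beta : ∀ μ ∈ S, wn μ ≠ 0 → ∀ z ∈ β.maxGenEigenspace μ,
      Nb μ (β z) = wn μ * Nb μ z := by
    intro μ hμ hμ0 z hz
    by_cases hzz : Nb μ z = 0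
    · have : z = 0 := (Nb_zero μ z).mp hzz
      subst this
      rw [map_zero, hzz, mul_zero]
    · have hβz : β z = μ • z + n μ z := by
        simp only [hn, LinearMap.sub_apply, LinearMap.smul_apply, Module.End.one_apply]
        abel
      have hlt : Nb μ (n μ z) < Nb μ (μ • z) := by
        rw [Nb_smul]
        exact (Nb_nil μ z hz).trans_lt
          (mul_lt_mul_of_pos_right (hδ'lt μ hμ hμ0) (pos_iff_ne_zero.mpr hzz))
      rw [hβz, ultra_add_eq (Nb μ) (Nb_add μ) (Nb_neg μ) hlt, Nb_smul]
  -- the norm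
  refine ⟨fun y => S.sup fun μ => Nb μ (π μ y), ?_, ?_, ?_, ?_, ?_, ?_⟩
  · -- (1) definiteness
    intro y
    constructor
    · intro h
      have hall : ∀ μ ∈ S, π μ y = 0 := by
        intro μ hμ
        refine (Nb_zero μ _).mp (le_antisymm ?_ zero_le)
        exact (Finset.le_sup (f := fun μ => Nb μ (π μ y)) hμ).trans h.le
      rw [← hsum y]
      exact Finset.sum_eq_zero hall
    · rintro rfl
      refine le_antisymm (Finset.sup_le fun μ _ => ?_) zero_le
      rw [map_zero, (Nb_zero μ 0).mpr rfl]
  · -- (2) homogeneity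
    intro a y
    beta_reduce
    have : (S.sup fun μ => Nb μ (π μ (a • y))) = wn a * S.sup fun μ => Nb μ (π μ y) := by
      rw [← nnreal_mul_sup]
      refine Finset.sup_congr rfl fun μ _ => ?_
      rw [map_smul, Nb_smul]
    rw [this, NNReal.coe_mul]
    rfl
  · -- (3) ultrametric
    intro y z
    refine Finset.sup_le fun μ hμ => ?_
    rw [map_add]
    refine (Nb_add μ _ _).trans (sup_le_sup ?_ ?_)
    · exact Finset.le_sup (f := fun μ => Nb μ (π μ y)) hμ
    · exact Finset.le_sup (f := fun μ => Nb μ (π μ z)) hμ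
  · -- (4) norm of sums from the E_ρ
    intro s y hy
    refine le_antisymm (Finset.sup_le fun μ hμ => ?_) (Finset.sup_le fun ρ hρ => ?_)
    · rw [map_sum]
      by_cases hin : w μ ∈ s
      · rw [Finset.sum_eq_single_of_mem (w μ) hin
          (fun ρ hρ hne => hπ_ker ρ μ (fun h => hne (h.symm ▸ rfl)) _ (hy ρ hρ))]
        refine le_trans ?_ (Finset.le_sup (f := fun ρ => S.sup fun μ => Nb μ (π μ (y ρ))) hin)
        exact Finset.le_sup (f := fun μ' => Nb μ' (π μ' (y (w μ)))) hμ
      · rw [Finset.sum_eq_zero (fun ρ hρ => hπ_ker ρ μ (fun h => hin (h ▸ hρ)) _ (hy ρ hρ))]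
        rw [(Nb_zero μ 0).mpr rfl]
        exact zero_le
    · refine Finset.sup_le fun μ hμ => ?_
      by_cases hwμ : w μ = ρ
      · have hcollapse : π μ (∑ ρ' ∈ s, y ρ') = π μ (y ρ) := by
          rw [map_sum, Finset.sum_eq_single_of_mem ρ hρ
            (fun ρ' hρ' hne => hπ_ker ρ' μ (fun h => hne (h ▸ hwμ ▸ rfl)) _ (hy ρ' hρ'))]
        rw [← hcollapse]
        exact Finset.le_sup (f := fun μ' => Nb μ' (π μ' (∑ ρ' ∈ s, y ρ'))) hμ
      · rw [hπ_ker ρ μ hwμ _ (hy ρ hρ), (Nb_zero μ 0).mpr rfl]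
        exact zero_le
  · -- (5) scaling on E_ρ for ρ ≠ 0
    intro ρ hρ y hy
    beta_reduce
    by_cases hex : ∃ μ ∈ S, w μ = ρ
    · obtain ⟨μ₀, hμ₀S, hμ₀⟩ := hex
      have hρ0 : 0 ≤ ρ := hμ₀ ▸ w.nonneg μ₀
      set ρn : NNReal := ⟨ρ, hρ0⟩ with hρn
      have hterm : ∀ μ ∈ S, Nb μ (π μ (β y)) = ρn * Nb μ (π μ y) := by
        intro μ hμ
        rw [hcomm]
        by_cases hwμ : w μ = ρ
        · have heq : wn μ = ρn := Subtype.ext hwμ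
          have hne0 : wn μ ≠ 0 := by
            rw [heq]
            intro h
            exact hρ (by simpa [hρn] using congrArg Subtype.val h)
          rw [Nb_beta μ hμ hne0 _ (hπ_mem μ y), heq]
        · rw [hπ_ker ρ μ hwμ y hy, map_zero, (Nb_zero μ 0).mpr rfl, mul_zero]
      have : (S.sup fun μ => Nb μ (π μ (β y))) = ρn * S.sup fun μ => Nb μ (π μ y) := by
        rw [← nnreal_mul_sup]
        exact Finset.sup_congr rfl hterm
      rw [this, NNReal.coe_mul]
      rfl
    · push_neg at hex
      have hy0 : y = 0 := by
        rw [← hsum y]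
        refine Finset.sum_eq_zero fun μ hμ => ?_
        exact hπ_ker ρ μ (hex μ hμ) y hy
      subst hy0
      have h0 : (S.sup fun μ => Nb μ (π μ (β 0))) = 0 := by
        refine le_antisymm (Finset.sup_le fun μ _ => ?_) zero_le
        rw [map_zero, map_zero, (Nb_zero μ 0).mpr rfl]
      have h1 : (S.sup fun μ => Nb μ (π μ (0 : F))) = 0 := by
        refine le_antisymm (Finset.sup_le fun μ _ => ?_) zero_le
        rw [map_zero, (Nb_zero μ 0).mpr rfl]
      rw [h0, h1]
      simp
  · -- (6) contraction on the 0-block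
    intro y hy
    refine Finset.sup_le fun μ hμ => ?_
    rw [hcomm]
    by_cases hμ0 : μ = 0
    · subst hμ0
      rw [hπ_same 0 y hy]
      have hβn : n 0 = β := by
        rw [hn]
        simp
      calc Nb 0 (β y) = Nb 0 (n 0 y) := by rw [hβn]
        _ ≤ δ' * Nb 0 y := Nb_nil 0 y hy
        _ ≤ δ * (S.sup fun μ => Nb μ (π μ y)) := by
            refine mul_le_mul' hδ'δ ?_
            have : Nb 0 (π 0 y) ≤ S.sup fun μ => Nb μ (π μ y) :=
              Finset.le_sup (f := fun μ => Nb μ (π μ y)) hμ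
            rwa [hπ_same 0 y hy] at this
    · rw [hπ_ne 0 μ (fun h => hμ0 h.symm) y hy, map_zero, (Nb_zero μ 0).mpr rfl]
      exact zero_le


end

/-- `E` admits a norm adapted to `α` with respect to which the restriction
of `α` to `E₀ = {x : α^n x = 0 for some n}` has operator norm `< ε`. -/
theorem exists_adapted_norm
    {K : Type*} [NontriviallyNormedField K] [IsUltrametricDist K] [CompleteSpace K]
    {E : Type*} [AddCommGroup E] [Module K E] [FiniteDimensional K E]
    (α : E →ₗ[K] E)
    {Kbar : Type*} [Field Kbar] [Algebra K Kbar] [IsAlgClosure K Kbar]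
    (v : AbsoluteValue Kbar ℝ) (hv : ∀ x : K, v (algebraMap K Kbar x) = ‖x‖)
    {ε : ℝ} (hε : 0 < ε) :
    ∃ N : E → ℝ, IsAdaptedNorm α v N ∧
      ∃ b, b < ε ∧ ∀ x : E, (∃ n : ℕ, (α ^ n) x = 0) → N (α x) ≤ b * N x := by

  classical
  haveI : IsAlgClosed Kbar := IsAlgClosure.isAlgClosed K
  have hna : IsNonarchimedean v := by
    refine AbsoluteValue.isNonarch_of_natCast_le_one v fun n => ?_
    have h1 : algebraMap K Kbar (n : K) = (n : Kbar) := map_natCast (algebraMap K Kbar) n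
    rw [← h1, hv]
    exact IsUltrametricDist.norm_natCast_le_one K n
  have hginj : ∀ x : E, (1 : Kbar) ⊗ₜ[K] x = 0 → x = 0 := by
    intro x hx
    let bE := Basis.ofVectorSpace K E
    have h1 : ∀ i, (bE.baseChange Kbar).repr ((1 : Kbar) ⊗ₜ[K] x) i = 0 := by
      intro i; rw [hx]; simp
    have h2 : ∀ i, bE.repr x i = 0 := by
      intro i
      have := h1 i
      rw [Basis.baseChange_repr_tmul] at this
      have h3 : algebraMap K Kbar (bE.repr x i) = 0 := by
        rw [Algebra.algebraMap_eq_smul_one]; exact this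
      exact (map_eq_zero_iff _ (algebraMap K Kbar).injective).mp h3
    have h4 : bE.repr x = 0 := Finsupp.ext h2
    simpa using congrArg bE.repr.symm h4
  obtain ⟨NN, h1, h2, h3, h4, h5, h6⟩ :=
    exists_good v hna (α.baseChange Kbar) (Real.toNNReal (ε / 2))
      (Real.toNNReal_pos.mpr (half_pos hε))
  set g : E →ₗ[K] Kbar ⊗[K] E := TensorProduct.mk K Kbar E 1 with hgdef
  have hgβ : ∀ x : E, (α.baseChange Kbar) (g x) = g (α x) := fun x => by
    show (α.baseChange Kbar) ((1 : Kbar) ⊗ₜ[K] x) = (1 : Kbar) ⊗ₜ[K] (α x)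
    exact LinearMap.baseChange_tmul _ _ _
  have hmem : ∀ (ρ : ℝ) (x : E), x ∈ eRho α Kbar v ρ →
      g x ∈ ⨆ μ, ⨆ (_ : v μ = ρ), Module.End.maxGenEigenspace (α.baseChange Kbar) μ := fun ρ x hx => hx
  refine ⟨fun x => (NN (g x) : ℝ), ⟨⟨fun x => (NN (g x)).coe_nonneg, fun x => ?_,
      fun a x => ?_, fun x y => ?_⟩, fun s hs x _ hx => ?_, fun ρ _ hρ0 x hx => ?_⟩,
      (Real.toNNReal (ε / 2) : ℝ), ?_, fun x hx => ?_⟩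
  · -- definiteness
    constructor
    · intro h
      exact hginj x ((h1 (g x)).mp (NNReal.coe_eq_zero.mp h))
    · rintro rfl
      beta_reduce
      rw [map_zero, (h1 0).mpr rfl, NNReal.coe_zero]
  · -- homogeneity
    have hsm : g (a • x) = algebraMap K Kbar a • g x := by
      rw [map_smul, algebraMap_smul]
    beta_reduce
    rw [hsm, h2, hv]
  · -- ultrametric
    have := h3 (g x) (g y)
    rw [← map_add] at this
    have hc := NNReal.coe_le_coe.mpr this
    rcases le_total (NN (g x)) (NN (g y)) with h | h
    · rw [sup_eq_right.mpr h] at hc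
      exact hc.trans (le_max_right _ _)
    · rw [sup_eq_left.mpr h] at hc
      exact hc.trans (le_max_left _ _)
  · -- sums from the pieces
    have key := h4 s (fun ρ => g (x ρ)) (fun ρ hρ => hmem ρ (x ρ) (hx ρ hρ))
    rw [← map_sum] at key
    beta_reduce
    rw [key, ← Finset.sup'_eq_sup hs]
    rw [Finset.comp_sup'_eq_sup'_comp hs NNReal.toReal (fun a b => rfl)]
    rfl
  · -- scaling
    have h7 := h5 ρ hρ0 (g x) (hmem ρ x hx)
    beta_reduce
    rwa [hgβ] at h7
  · -- b < ε
    rw [Real.coe_toNNReal _ (half_pos hε).le]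
    exact half_lt_self hε
  · -- contraction on E₀
    obtain ⟨m, hm⟩ := hx
    have hpow : ∀ (m : ℕ) (x : E), ((α.baseChange Kbar) ^ m) (g x) = g ((α ^ m) x) := by
      intro m
      induction m with
      | zero => intro x; simp
      | succ m ih =>
        intro x
        rw [pow_succ, pow_succ, Module.End.mul_apply, Module.End.mul_apply, hgβ, ih]
    have hmem0 : g x ∈ Module.End.maxGenEigenspace (α.baseChange Kbar) 0 := by
      rw [Module.End.mem_maxGenEigenspace]
      exact ⟨m, by
        rw [zero_smul]
        exact (congrArg (fun f : Module.End Kbar (Kbar ⊗[K] E) => (f ^ m) (g x))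
          (sub_zero _)).trans (by rw [hpow, hm, map_zero])⟩
    have := h6 (g x) hmem0
    rw [hgβ] at this
    calc ((NN (g (α x)) : ℝ)) ≤ ((Real.toNNReal (ε / 2) * NN (g x) : NNReal) : ℝ) :=
          NNReal.coe_le_coe.mpr this
      _ = (Real.toNNReal (ε / 2) : ℝ) * (NN (g x) : ℝ) := NNReal.coe_mul _ _
end

section
/- Let E be an ultrametric Banach space over a complete ultrametric field K, U ⊆ E open, f : U → E analytic, and p ∈ U a fixed point of f such that α := f'(p) is a bicontinuous linear automorphism of E. Then the following are equivalent: (a) E admits a centre-stable subspace (with a = 1) with respect to α, and each neighbourhood P of p in U contains a neighbourhood Q of p such that f(Q) ⊆ Q; (b) there exists an ultrametric norm on E defining its topology such that the operator norm of α with respect to it is ≤ 1. -/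
open Filter Topology

/-- The norm `N` defines the canonical topology of `E`, i.e. it is equivalent
to the ambient norm. -/
def DefinesTopology {E : Type*} [NormedAddCommGroup E] (N : E → ℝ) : Prop :=
  ∃ c > 0, ∃ C > 0, ∀ x : E, c * ‖x‖ ≤ N x ∧ N x ≤ C * ‖x‖

section Aux

variable {K : Type*} [NormedField K] {E : Type*} [AddCommGroup E] [Module K E] {N : E → ℝ}

lemma IsUltraNorm.zero (h : IsUltraNorm K N) : N 0 = 0 := (h.2.1 0).2 rfl

lemma IsUltraNorm.neg (h : IsUltraNorm K N) (v : E) : N (-v) = N v := by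
  have := h.2.2.1 (-1 : K) v
  simpa using this

lemma IsUltraNorm.add_eq (h : IsUltraNorm K N) {u v : E} (hlt : N v < N u) :
    N (u + v) = N u := by
  refine le_antisymm ((h.2.2.2 u v).trans (max_le le_rfl hlt.le)) ?_
  have h1 := h.2.2.2 (u + v) (-v)
  rw [add_neg_cancel_right, h.neg] at h1
  exact (le_max_iff.1 h1).resolve_right (not_le.2 hlt)

end Aux

lemma quad_bound {K : Type*} [NontriviallyNormedField K] {E : Type*} [NormedAddCommGroup E]
    [NormedSpace K E] {f : E → E} {p : E} (hfa : AnalyticAt K f p)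
    {A : E →L[K] E} (hA : HasFDerivAt f A p) :
    ∃ δ > 0, ∃ C2 > 0, ∀ h : E, ‖h‖ ≤ δ → ‖f (p + h) - f p - A h‖ ≤ C2 * (‖h‖ * ‖h‖) := by
  obtain ⟨ps, hps⟩ := hfa
  have h2 := hps.isBigO_sub_partialSum_pow 2
  have hkey : ∀ h : E, f (p + h) - ps.partialSum 2 h = f (p + h) - f p - A h := by
    intro h
    have h1 : (continuousMultilinearCurryFin1 K E E) (ps 1) = A := by
      rw [← hps.fderiv_eq]; exact hA.fderiv
    have h0 : ps 0 (fun _ : Fin 0 => h) = f p := hps.coeff_zero _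
    have h1' : ps 1 (fun _ : Fin 1 => h) = A h := by
      rw [← h1]; simp only [continuousMultilinearCurryFin1_apply]
      congr 1
    simp [FormalMultilinearSeries.partialSum, Finset.sum_range_succ, h0, h1']
    abel
  rw [show (fun y : E => f (p + y) - ps.partialSum 2 y)
      = fun y : E => f (p + y) - f p - A y from funext hkey] at h2
  rw [Asymptotics.isBigO_iff] at h2
  obtain ⟨C, hC⟩ := h2
  rw [Metric.eventually_nhds_iff] at hC
  obtain ⟨ε, hε, hball⟩ := hC
  refine ⟨ε / 2, by positivity, max C 1, lt_of_lt_of_le one_pos (le_max_right _ _),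
    fun h hh => ?_⟩
  have hd : dist h 0 < ε := by rw [dist_zero_right]; linarith
  have := hball hd
  rw [norm_pow, Real.norm_eq_abs] at this
  calc ‖f (p + h) - f p - A h‖ ≤ C * |‖h‖| ^ 2 := this
    _ ≤ max C 1 * (‖h‖ * ‖h‖) := by
        rw [abs_of_nonneg (norm_nonneg h), pow_two]
        exact mul_le_mul_of_nonneg_right (le_max_left _ _) (by positivity)

lemma quad_half {K : Type*} [NontriviallyNormedField K] {E : Type*} [NormedAddCommGroup E]
    [NormedSpace K E] {f : E → E} {p : E} (hfa : AnalyticAt K f p) (hfp : f p = p)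
    {A : E →L[K] E} (hA : HasFDerivAt f A p)
    {N : E → ℝ} {c C : ℝ} (hc : 0 < c) (hC : 0 < C)
    (hcC : ∀ x : E, c * ‖x‖ ≤ N x ∧ N x ≤ C * ‖x‖) :
    ∃ ρ > 0, ∀ h : E, N h ≤ ρ → N (f (p + h) - p - A h) ≤ N h / 2 := by
  obtain ⟨δ, hδ, C2, hC2, hquad⟩ := quad_bound hfa hA
  set C3 := C * C2 / (c * c) with hC3def
  have hC3 : 0 < C3 := by positivity
  refine ⟨min (c * δ) (1 / (2 * C3)), lt_min (by positivity) (by positivity), fun h hh => ?_⟩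
  have h1 : c * ‖h‖ ≤ N h := (hcC h).1
  have hNnn : 0 ≤ N h := le_trans (by positivity) h1
  have h2 : ‖h‖ ≤ δ := by
    have hle : N h ≤ c * δ := le_trans hh (min_le_left _ _)
    nlinarith
  have h3 := hquad h h2
  rw [hfp] at h3
  have h5 : N h ≤ 1 / (2 * C3) := le_trans hh (min_le_right _ _)
  have h6 : C3 * N h ≤ 1 / 2 := by
    have h7 := mul_le_mul_of_nonneg_left h5 hC3.le
    rw [mul_one_div, mul_comm 2 C3, ← div_div, div_self hC3.ne'] at h7
    linarith
  calc N (f (p + h) - p - A h) ≤ C * ‖f (p + h) - p - A h‖ := (hcC _).2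
    _ ≤ C * (C2 * (‖h‖ * ‖h‖)) := mul_le_mul_of_nonneg_left h3 hC.le
    _ = C3 * ((c * ‖h‖) * (c * ‖h‖)) := by rw [hC3def]; field_simp
    _ ≤ C3 * (N h * N h) :=
        mul_le_mul_of_nonneg_left (mul_self_le_mul_self (by positivity) h1) hC3.le
    _ ≤ N h / 2 := by nlinarith

set_option maxHeartbeats 1000000 in
/-- For an analytic map `f` on an open subset of an ultrametric Banach
space, with fixed point `p` whose differential `α = f'(p)` is a bicontinuous automorphism:
`E` has a centre-stable subspace (with `a = 1`) for `α` and every neighbourhood of `p`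
contains an `f`-invariant neighbourhood of `p`, if and only if `α` has operator norm `≤ 1`
with respect to some ultrametric norm defining the topology of `E`. -/
theorem centre_stable_and_invariant_nbhds_iff_opNorm_le_one
    {K : Type*} [NontriviallyNormedField K] [IsUltrametricDist K] [CompleteSpace K]
    {E : Type*} [NormedAddCommGroup E] [NormedSpace K E] [IsUltrametricDist E]
    [CompleteSpace E]
    {U : Set E} (hU : IsOpen U) {f : E → E} (hf : AnalyticOnNhd K f U)
    {p : E} (hp : p ∈ U) (hfp : f p = p)
    (α : E ≃L[K] E) (hα : HasFDerivAt f (α : E →L[K] E) p) :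
    ((∃ (Ecs Eu : Submodule K E) (N : E → ℝ),
        (∀ x ∈ Ecs, α x ∈ Ecs) ∧ (∀ x ∈ Eu, α x ∈ Eu) ∧
        IsCompl Ecs Eu ∧
        Set.BijOn ⇑α (Eu : Set E) (Eu : Set E) ∧
        IsUltraNorm K N ∧ DefinesTopology N ∧
        (∀ x ∈ Ecs, ∀ y ∈ Eu, N (x + y) = max (N x) (N y)) ∧
        (∀ x ∈ Ecs, N (α x) ≤ N x) ∧
        (∃ b, 1 < b ∧ ∀ y ∈ Eu, b * N y ≤ N (α y))) ∧
      (∀ P, P ⊆ U → P ∈ 𝓝 p → ∃ Q, Q ⊆ P ∧ Q ∈ 𝓝 p ∧ Set.MapsTo f Q Q))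
    ↔ ∃ N : E → ℝ, IsUltraNorm K N ∧ DefinesTopology N ∧ ∀ x : E, N (α x) ≤ N x := by
  constructor
  · -- forward direction
    rintro ⟨⟨Ecs, Eu, N, hαcs, hαu, hcompl, -, hN, hNtop, hmax, hcsle, b, hb, hexp⟩, hinv⟩
    refine ⟨N, hN, hNtop, ?_⟩
    obtain ⟨c, hc, C, hC, hcC⟩ := hNtop
    have hEu : Eu = ⊥ := by
      by_contra hne
      obtain ⟨y₀, hy₀mem, hy₀⟩ := Submodule.exists_mem_ne_zero_of_ne_bot hne
      obtain ⟨ρ, hρ, hhalf⟩ := quad_half (hf p hp) hfp hα hc hC hcC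
      -- invariant neighbourhood inside the N-ball of radius ρ
      set P : Set E := U ∩ {x | N (x - p) < ρ} with hPdef
      have hPU : P ⊆ U := Set.inter_subset_left
      have hPnhds : P ∈ 𝓝 p := by
        refine Filter.inter_mem (hU.mem_nhds hp) ?_
        refine Filter.mem_of_superset (Metric.ball_mem_nhds p (by positivity : 0 < ρ / C)) ?_
        intro x hx
        have hx' : ‖x - p‖ < ρ / C := by rwa [Metric.mem_ball, dist_eq_norm] at hx
        have h1 : N (x - p) ≤ C * ‖x - p‖ := (hcC (x - p)).2
        have h2 : N (x - p) < C * (ρ / C) :=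
          lt_of_le_of_lt h1 (mul_lt_mul_of_pos_left hx' hC)
        rw [mul_div_cancel₀ _ hC.ne'] at h2
        exact h2
      obtain ⟨Q, hQP, hQnhds, hQmap⟩ := hinv P hPU hPnhds
      -- starting point in Q along Eu
      obtain ⟨t, ht0, ht1⟩ := NormedField.exists_norm_lt_one K
      have htne : t ≠ 0 := fun h => by simp [h] at ht0
      have htend : Tendsto (fun n : ℕ => p + t ^ n • y₀) atTop (𝓝 p) := by
        have h1 : Tendsto (fun n : ℕ => t ^ n) atTop (𝓝 (0 : K)) :=
          tendsto_pow_atTop_nhds_zero_of_norm_lt_one ht1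
        have h2 := h1.smul_const y₀
        rw [zero_smul] at h2
        simpa using tendsto_const_nhds.add h2
      obtain ⟨n₀, hn₀⟩ := (htend.eventually_mem hQnhds).exists
      set y : E := t ^ n₀ • y₀ with hydef
      have hy_mem : y ∈ Eu := Eu.smul_mem _ hy₀mem
      have hy_ne : y ≠ 0 := smul_ne_zero (pow_ne_zero _ htne) hy₀
      have hNy : 0 < N y :=
        lt_of_le_of_ne (hN.1 y) (fun h => hy_ne ((hN.2.1 y).1 h.symm))
      -- projections
      set πcs := Ecs.projectionOnto Eu hcompl with hπcs
      set πu := Eu.projectionOnto Ecs hcompl.symm with hπu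
      have hdecomp : ∀ x : E, (πcs x : E) + (πu x : E) = x := fun x =>
        Submodule.projection_add_projection_eq_self hcompl x
      have hproj_cs : ∀ u v : E, u ∈ Ecs → v ∈ Eu → (πcs (u + v) : E) = u := by
        intro u v hu hv
        rw [map_add]
        have h1 : πcs u = ⟨u, hu⟩ := Submodule.projectionOnto_apply_left hcompl ⟨u, hu⟩
        have h2 : πcs v = 0 := Submodule.projectionOnto_apply_of_mem_right hcompl hv
        rw [h1, h2]; simp
      have hproj_u : ∀ u v : E, u ∈ Ecs → v ∈ Eu → (πu (u + v) : E) = v := by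
        intro u v hu hv
        rw [map_add]
        have h1 : πu v = ⟨v, hv⟩ :=
          Submodule.projectionOnto_apply_left hcompl.symm ⟨v, hv⟩
        have h2 : πu u = 0 := Submodule.projectionOnto_apply_of_mem_right hcompl.symm hu
        rw [h1, h2]; simp
      set z : ℕ → E := fun n => f^[n] (p + y) with hzdef
      have key : ∀ n, z n ∈ Q ∧ N (πcs (z n - p)) ≤ N (πu (z n - p)) ∧
          b ^ n * N y ≤ N (πu (z n - p)) := by
        intro n
        induction n with
        | zero =>
          have hz0 : z 0 = p + y := rfl
          have hcs0 : (πcs (z 0 - p) : E) = 0 := by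
            rw [hz0, add_sub_cancel_left]
            have h1 : (πcs (0 + y) : E) = 0 := hproj_cs 0 y Ecs.zero_mem hy_mem
            rwa [zero_add] at h1
          have hu0 : (πu (z 0 - p) : E) = y := by
            rw [hz0, add_sub_cancel_left]
            have h1 : (πu (0 + y) : E) = y := hproj_u 0 y Ecs.zero_mem hy_mem
            rwa [zero_add] at h1
          refine ⟨hn₀, ?_, ?_⟩
          · rw [hcs0, hu0, hN.zero]; exact hN.1 y
          · rw [hu0, pow_zero, one_mul]
        | succ n ih =>
          obtain ⟨hzQ, hcone, hgrow⟩ := ih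
          set h : E := z n - p with hh
          set x : E := (πcs h : E) with hx'
          set yn : E := (πu h : E) with hyn'
          have hx : x ∈ Ecs := (πcs h).2
          have hyn : yn ∈ Eu := (πu h).2
          have hxy : x + yn = h := hdecomp h
          have hNh : N h = N yn := by
            rw [← hxy, hmax x hx yn hyn, max_eq_right hcone]
          have hbnn : (0 : ℝ) < b ^ n * N y := by positivity
          have hNyn_pos : 0 < N yn := lt_of_lt_of_le hbnn hgrow
          have hzP : z n ∈ P := hQP hzQ
          have hNhρ : N h < ρ := hzP.2
          set R : E := f (p + h) - p - (α : E →L[K] E) h with hR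
          have hph : p + h = z n := by rw [hh]; abel
          have hαh : (α : E →L[K] E) h = α h := by
            rw [ContinuousLinearEquiv.coe_coe]
          have hznext : z (n + 1) - p = α h + R := by
            have h1 : z (n + 1) = f (z n) := Function.iterate_succ_apply' f n _
            rw [h1, ← hph, hR, hαh]; abel
          have hNR : N R ≤ N h / 2 := hhalf h hNhρ.le
          have hexp' : b * N yn ≤ N (α yn) := hexp yn hyn
          have hNR' : N R < N (α yn) := by
            rw [hNh] at hNR
            nlinarith
          have hαx : α x ∈ Ecs := hαcs x hx
          have hαyn : α yn ∈ Eu := hαu yn hyn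
          have hRsum : (πcs R : E) + (πu R : E) = R := hdecomp R
          have hNRmax : N R = max (N (πcs R : E)) (N (πu R : E)) := by
            rw [← hmax _ (πcs R).2 _ (πu R).2, hRsum]
          have hNRcs : N (πcs R : E) ≤ N R := hNRmax ▸ le_max_left _ _
          have hNRu : N (πu R : E) ≤ N R := hNRmax ▸ le_max_right _ _
          have hαhsplit : α h = α x + α yn := by rw [← hxy, map_add]
          have hnext : z (n + 1) - p = (α x + (πcs R : E)) + (α yn + (πu R : E)) := by
            rw [hznext, hαhsplit]
            conv_lhs => rw [← hRsum]
            abel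
          have hcsnext : (πcs (z (n + 1) - p) : E) = α x + (πcs R : E) := by
            rw [hnext]
            exact hproj_cs _ _ (Ecs.add_mem hαx (πcs R).2) (Eu.add_mem hαyn (πu R).2)
          have hunext : (πu (z (n + 1) - p) : E) = α yn + (πu R : E) := by
            rw [hnext]
            exact hproj_u _ _ (Ecs.add_mem hαx (πcs R).2) (Eu.add_mem hαyn (πu R).2)
          have hNunext : N (πu (z (n + 1) - p) : E) = N (α yn) := by
            rw [hunext]
            exact hN.add_eq (lt_of_le_of_lt hNRu hNR')
          have hzQ' : z (n + 1) ∈ Q := by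
            have h1 : z (n + 1) = f (z n) := Function.iterate_succ_apply' f n _
            rw [h1]; exact hQmap hzQ
          refine ⟨hzQ', ?_, ?_⟩
          · rw [hcsnext, hNunext]
            refine le_trans (hN.2.2.2 _ _) (max_le ?_ (le_trans hNRcs hNR'.le))
            refine le_trans (hcsle x hx) (le_trans hcone ?_)
            nlinarith
          · rw [hNunext]
            calc b ^ (n + 1) * N y = b * (b ^ n * N y) := by ring
              _ ≤ b * N yn := mul_le_mul_of_nonneg_left hgrow (by linarith)
              _ ≤ N (α yn) := hexp'
      -- contradiction: unbounded growth inside a bounded set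
      obtain ⟨n, hn⟩ := pow_unbounded_of_one_lt (ρ / N y) hb
      obtain ⟨hzQ, hcone, hgrow⟩ := key n
      have h1 : N (πu (z n - p) : E) ≤ N (z n - p) := by
        have h2 := hmax _ (πcs (z n - p)).2 _ (πu (z n - p)).2
        rw [hdecomp (z n - p)] at h2
        rw [h2]; exact le_max_right _ _
      have h2 : N (z n - p) < ρ := (hQP hzQ).2
      have h3 : ρ < b ^ n * N y := (div_lt_iff₀ hNy).1 hn
      linarith
    -- now Ecs = ⊤
    have hEcs : Ecs = ⊤ := by
      have h1 := hcompl.sup_eq_top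
      rwa [hEu, sup_bot_eq] at h1
    intro x
    exact hcsle x (hEcs ▸ Submodule.mem_top)
  · -- backward direction
    rintro ⟨N, hN, hNtop, hNα⟩
    obtain ⟨c, hc, C, hC, hcC⟩ := hNtop
    constructor
    · refine ⟨⊤, ⊥, N, fun x _ => trivial, ?_, isCompl_top_bot, ?_, hN,
        ⟨c, hc, C, hC, hcC⟩, ?_, fun x _ => hNα x, ⟨2, one_lt_two, ?_⟩⟩
      · intro x hx
        rw [Submodule.mem_bot] at hx ⊢
        rw [hx, map_zero]
      · rw [Submodule.bot_coe]
        exact Set.bijOn_singleton.mpr (map_zero α)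
      · intro x _ y hy
        rw [Submodule.mem_bot] at hy
        rw [hy, add_zero, hN.zero, max_eq_left (hN.1 x)]
      · intro y hy
        rw [Submodule.mem_bot] at hy
        rw [hy, map_zero, hN.zero, mul_zero]
    · intro P hPU hPnhds
      obtain ⟨ρ, hρ, hhalf⟩ := quad_half (hf p hp) hfp hα hc hC hcC
      obtain ⟨ε, hε, hball⟩ := Metric.mem_nhds_iff.1 hPnhds
      set r : ℝ := min ρ (c * ε / 2) with hrdef
      have hr : 0 < r := lt_min hρ (by positivity)
      refine ⟨{x | N (x - p) ≤ r}, ?_, ?_, ?_⟩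
      · intro x hx
        have h1 : c * ‖x - p‖ ≤ N (x - p) := (hcC _).1
        have h2 : N (x - p) ≤ c * ε / 2 := le_trans hx (min_le_right _ _)
        have h3 : ‖x - p‖ < ε := by nlinarith
        exact hball (by rwa [Metric.mem_ball, dist_eq_norm])
      · refine Filter.mem_of_superset (Metric.ball_mem_nhds p (by positivity : 0 < r / C)) ?_
        intro x hx
        have hx' : ‖x - p‖ < r / C := by rwa [Metric.mem_ball, dist_eq_norm] at hx
        have h1 : N (x - p) ≤ C * ‖x - p‖ := (hcC _).2
        have h2 : C * ‖x - p‖ < C * (r / C) := mul_lt_mul_of_pos_left hx' hC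
        rw [mul_div_cancel₀ _ hC.ne'] at h2
        exact le_of_lt (lt_of_le_of_lt h1 h2)
      · intro q hq
        simp only [Set.mem_setOf_eq] at hq ⊢
        set h : E := q - p with hh
        have hph : p + h = q := by rw [hh]; abel
        have hhr : N h ≤ r := hq
        have hR := hhalf h (le_trans hhr (min_le_left _ _))
        have hfq : f q - p = α h + (f (p + h) - p - (α : E →L[K] E) h) := by
          rw [hph, ContinuousLinearEquiv.coe_coe]
          abel
        rw [hfq]
        refine le_trans (hN.2.2.2 _ _) (max_le (le_trans (hNα h) hhr) ?_)
        have hNnn : 0 ≤ N h := hN.1 h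
        refine le_trans hR ?_
        linarith
end
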